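/- arXiv:0709.3997 — 12 statements merged into one kernel-verified Lean document; each statement's English description precedes it below -/
import Mathlib

section
/- The image under the matrix exponential of the set of symmetric traceless real 2×2 matrices equals the set of symmetric real 2×2 matrices with determinant 1 and positive trace: exp({A ∈ M₂(ℝ) : Aᵀ = A, Tr A = 0}) = {s ∈ M₂(ℝ) : sᵀ = s, det s = 1, Tr s > 0}. -/
open Matrix

namespace ExpSymmAux

variable {n : Type*} [Fintype n] [DecidableEq n]

lemma star_coe_eq_inv (U : Matrix.unitaryGroup n ℝ) :
    star (U : Matrix n n ℝ) = (U : Matrix n n ℝ)⁻¹ :=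
  (Matrix.inv_eq_right_inv ((Matrix.mem_unitaryGroup_iff).mp U.2)).symm

lemma exp_conj_unitary (U : Matrix.unitaryGroup n ℝ) (B : Matrix n n ℝ) :
    NormedSpace.exp ((U : Matrix n n ℝ) * B * star (U : Matrix n n ℝ))
      = (U : Matrix n n ℝ) * NormedSpace.exp B * star (U : Matrix n n ℝ) := by
  have h : IsUnit (U : Matrix n n ℝ) := isUnit_iff_exists.mpr
    ⟨star (U : Matrix n n ℝ), (Matrix.mem_unitaryGroup_iff).mp U.2,
      (Matrix.mem_unitaryGroup_iff').mp U.2⟩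
  rw [star_coe_eq_inv, Matrix.exp_conj _ B h]

lemma trace_conj_unitary (U : Matrix.unitaryGroup n ℝ) (B : Matrix n n ℝ) :
    ((U : Matrix n n ℝ) * B * star (U : Matrix n n ℝ)).trace = B.trace := by
  rw [Matrix.trace_mul_cycle, (Matrix.mem_unitaryGroup_iff').mp U.2, Matrix.one_mul]

lemma det_conj_unitary (U : Matrix.unitaryGroup n ℝ) (B : Matrix n n ℝ) :
    ((U : Matrix n n ℝ) * B * star (U : Matrix n n ℝ)).det = B.det := by
  rw [Matrix.det_mul, Matrix.det_mul, mul_comm, ← mul_assoc, ← Matrix.det_mul,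
    (Matrix.mem_unitaryGroup_iff').mp U.2, Matrix.det_one, one_mul]

omit [DecidableEq n] in
lemma exp_pi_real (v : n → ℝ) :
    NormedSpace.exp v = fun i => Real.exp (v i) := by
  cases nonempty_fintype n
  rw [Pi.exp_def, Real.exp_eq_exp_ℝ]

end ExpSymmAux

open ExpSymmAux

/-- The image under the matrix exponential of the set of symmetric traceless real 2×2
matrices equals the set of symmetric real 2×2 matrices with determinant 1 and
positive trace. -/
theorem exp_image_symm_traceless :
    NormedSpace.exp '' {A : Matrix (Fin 2) (Fin 2) ℝ | Aᵀ = A ∧ A.trace = 0}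
      = {s : Matrix (Fin 2) (Fin 2) ℝ | sᵀ = s ∧ s.det = 1 ∧ 0 < s.trace} := by
  ext s
  constructor
  · rintro ⟨A, ⟨hsym, htr⟩, rfl⟩
    have hA : A.IsHermitian := by
      rwa [Matrix.IsHermitian, Matrix.conjTranspose_eq_transpose_of_trivial]
    set U := hA.eigenvectorUnitary with hU
    set μ := hA.eigenvalues with hμ
    have hspec : A = (U : Matrix (Fin 2) (Fin 2) ℝ) * Matrix.diagonal μ
        * star (U : Matrix (Fin 2) (Fin 2) ℝ) := by
      have := hA.spectral_theorem
      simpa [RCLike.ofReal_real_eq_id] using this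
    have hexp : NormedSpace.exp A = (U : Matrix (Fin 2) (Fin 2) ℝ)
        * Matrix.diagonal (fun i => Real.exp (μ i)) * star (U : Matrix (Fin 2) (Fin 2) ℝ) := by
      rw [hspec, exp_conj_unitary, Matrix.exp_diagonal, exp_pi_real]
    have hsum : μ 0 + μ 1 = 0 := by
      have h1 : A.trace = (Matrix.diagonal μ).trace := by
        conv_lhs => rw [hspec]
        exact trace_conj_unitary U _
      rw [htr] at h1
      have := h1.symm
      simpa [Matrix.trace, Fin.sum_univ_two] using this
    refine ⟨?_, ?_, ?_⟩
    · rw [← Matrix.exp_transpose, hsym]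
    · rw [hexp, det_conj_unitary, Matrix.det_diagonal, Fin.prod_univ_two,
        ← Real.exp_add, hsum, Real.exp_zero]
    · rw [hexp, trace_conj_unitary]
      have : (Matrix.diagonal fun i => Real.exp (μ i)).trace
          = Real.exp (μ 0) + Real.exp (μ 1) := by
        simp [Matrix.trace, Fin.sum_univ_two]
      rw [this]
      positivity
  · rintro ⟨hsym, hdet, htr⟩
    have hs : s.IsHermitian := by
      rwa [Matrix.IsHermitian, Matrix.conjTranspose_eq_transpose_of_trivial]
    set U := hs.eigenvectorUnitary with hU
    set μ := hs.eigenvalues with hμ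
    have hspec : s = (U : Matrix (Fin 2) (Fin 2) ℝ) * Matrix.diagonal μ
        * star (U : Matrix (Fin 2) (Fin 2) ℝ) := by
      have := hs.spectral_theorem
      simpa [RCLike.ofReal_real_eq_id] using this
    have hprod : μ 0 * μ 1 = 1 := by
      have := hs.det_eq_prod_eigenvalues
      rw [hdet] at this
      have := this.symm
      simpa [Fin.prod_univ_two] using this
    have hsumpos : 0 < μ 0 + μ 1 := by
      have h1 : s.trace = (Matrix.diagonal μ).trace := by
        conv_lhs => rw [hspec]
        exact trace_conj_unitary U _
      have h2 : (Matrix.diagonal μ).trace = μ 0 + μ 1 := by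
        simp [Matrix.trace, Fin.sum_univ_two]
      rw [h1, h2] at htr
      exact htr
    have h0 : 0 < μ 0 := by nlinarith [hprod, hsumpos, sq_nonneg (μ 0), sq_nonneg (μ 1)]
    have h1 : 0 < μ 1 := by nlinarith [hprod, hsumpos, sq_nonneg (μ 0), sq_nonneg (μ 1)]
    have hpos : ∀ i, 0 < μ i := by
      intro i
      fin_cases i
      · simpa using h0
      · simpa using h1
    refine ⟨(U : Matrix (Fin 2) (Fin 2) ℝ) * Matrix.diagonal (fun i => Real.log (μ i))
        * star (U : Matrix (Fin 2) (Fin 2) ℝ), ⟨?_, ?_⟩, ?_⟩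
    · have hstar : star (U : Matrix (Fin 2) (Fin 2) ℝ) = (U : Matrix (Fin 2) (Fin 2) ℝ)ᵀ := by
        rw [Matrix.star_eq_conjTranspose, Matrix.conjTranspose_eq_transpose_of_trivial]
      rw [hstar]
      simp [Matrix.transpose_mul, Matrix.mul_assoc]
    · rw [trace_conj_unitary]
      have : (Matrix.diagonal fun i => Real.log (μ i)).trace
          = Real.log (μ 0) + Real.log (μ 1) := by
        simp [Matrix.trace, Fin.sum_univ_two]
      rw [this, ← Real.log_mul (hpos 0).ne' (hpos 1).ne', hprod, Real.log_one]
    · rw [exp_conj_unitary, Matrix.exp_diagonal, exp_pi_real]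
      have : (fun i => Real.exp (Real.log (μ i))) = μ := by
        funext i; exact Real.exp_log (hpos i)
      rw [this, ← hspec]
end

section
/- The set of symmetric real 2×2 matrices with determinant 1 and negative trace equals the set of matrices of the form −exp(A) with A a symmetric traceless real 2×2 matrix: {g ∈ M₂(ℝ) : gᵀ = g, det g = 1, Tr g < 0} = {−exp(A) : A ∈ M₂(ℝ), Aᵀ = A, Tr A = 0}. -/
open Matrix

lemma exp_diag_aux (s : ℝ) : NormedSpace.exp (diagonal ![s, -s] : Matrix (Fin 2) (Fin 2) ℝ)
    = diagonal ![Real.exp s, Real.exp (-s)] := by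
  rw [Matrix.exp_diagonal]
  ext i j
  fin_cases i <;> fin_cases j <;>
    simp [Pi.exp_def, Real.exp_eq_exp_ℝ, Matrix.diagonal]

lemma diag_fin_two (s t : ℝ) : (diagonal ![s, t] : Matrix (Fin 2) (Fin 2) ℝ) = !![s,0;0,t] := by
  ext i j; fin_cases i <;> fin_cases j <;> simp [Matrix.diagonal]

lemma exp_key (x y s : ℝ) (hs : 0 < s) (h : x^2 + y^2 = s^2) :
    NormedSpace.exp !![x, y; y, -x] =
      !![Real.cosh s + x * (Real.sinh s / s), y * (Real.sinh s / s);
         y * (Real.sinh s / s), Real.cosh s - x * (Real.sinh s / s)] := by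
  have hsne : s ≠ 0 := ne_of_gt hs
  have hexp := Real.exp_ne_zero s
  rcases eq_or_ne y 0 with hy | hy
  · -- diagonal case: x = s or x = -s
    subst hy
    have hx : x = s ∨ x = -s := by
      rcases mul_eq_zero.mp (show (x - s) * (x + s) = 0 by nlinarith) with h1 | h1
      · left; linarith
      · right; linarith
    have hd : !![x, (0:ℝ); 0, -x] = diagonal ![x, -x] := by rw [diag_fin_two]
    rw [hd, exp_diag_aux, diag_fin_two]
    ext i j
    fin_cases i <;> fin_cases j <;>
      rcases hx with rfl | rfl <;>
      simp [Real.cosh_eq, Real.sinh_eq, Real.exp_neg] <;>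
      field_simp <;> ring
  · -- y ≠ 0 : conjugation
    have hy2 : 0 < y^2 := by positivity
    have hxs : x^2 < s^2 := by nlinarith
    have hsx : 0 < s + x := by nlinarith
    set C : Matrix (Fin 2) (Fin 2) ℝ := !![s + x, -y; y, s + x] with hC
    have hdetC : C.det = (s+x)^2 + y^2 := by simp [hC, Matrix.det_fin_two_of]; ring
    have hdet : IsUnit C.det := by
      rw [hdetC]; exact (by positivity : ((s+x)^2 + y^2 : ℝ) ≠ 0).isUnit
    obtain ⟨U, hU⟩ := C.isUnit_iff_isUnit_det.mpr hdet
    have hUinv : (↑U⁻¹ : Matrix (Fin 2) (Fin 2) ℝ) = C⁻¹ := by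
      rw [Matrix.coe_units_inv, hU]
    have hAC : !![x, y; y, -x] * C = C * diagonal ![s, -s] := by
      ext i j
      fin_cases i <;> fin_cases j <;>
        simp [hC, Matrix.mul_apply, Fin.sum_univ_two, Matrix.diagonal] <;> nlinarith
    have hA : !![x, y; y, -x] = C * diagonal ![s, -s] * C⁻¹ := by
      rw [← hAC, Matrix.mul_nonsing_inv_cancel_right _ _ hdet]
    rw [hA, ← hUinv, ← hU, Matrix.exp_units_conj, hU, hUinv, exp_diag_aux]
    haveI := C.invertibleOfIsUnitDet hdet
    rw [Matrix.mul_inv_eq_iff_eq_mul_of_invertible]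
    ext i j
    fin_cases i <;> fin_cases j <;>
      simp [hC, Matrix.mul_apply, Fin.sum_univ_two, Matrix.diagonal,
        Real.cosh_eq, Real.sinh_eq, Real.exp_neg] <;>
      field_simp <;> try ring
    · linear_combination (1 - Real.exp s^2) * h
    · linear_combination (Real.exp s^2 - 1) * h

set_option maxHeartbeats 2000000 in
/-- The set of symmetric real 2×2 matrices with determinant 1 and negative trace equals
the set of matrices of the form `-exp A` with `A` a symmetric traceless real 2×2 matrix. -/
theorem symm_det_one_neg_trace_eq_neg_exp_image :
    {g : Matrix (Fin 2) (Fin 2) ℝ | gᵀ = g ∧ g.det = 1 ∧ g.trace < 0}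
      = (fun A => -NormedSpace.exp A) ''
        {A : Matrix (Fin 2) (Fin 2) ℝ | Aᵀ = A ∧ A.trace = 0} := by
  ext g
  simp only [Set.mem_setOf_eq, Set.mem_image]
  constructor
  · rintro ⟨hsym, hdet, htr⟩
    have hb : g 1 0 = g 0 1 := by
      conv_lhs => rw [← hsym]
      rfl
    set p : ℝ := -(g 0 0) with hp
    set q : ℝ := -(g 0 1) with hq
    set r : ℝ := -(g 1 1) with hr
    have hgeta : g = !![-p, -q; -q, -r] := by
      rw [Matrix.eta_fin_two g, hb]; simp [hp, hq, hr]
    have hdet' : p * r - q^2 = 1 := by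
      rw [Matrix.det_fin_two, hb] at hdet
      rw [hp, hq, hr]
      linear_combination hdet
    have htr' : 0 < p + r := by
      rw [Matrix.trace_fin_two] at htr
      simp [hp, hr]; linarith
    have hpr : 0 < p * r := by nlinarith [sq_nonneg q]
    have hp0 : 0 < p := by
      rcases lt_trichotomy p 0 with h1 | h1 | h1
      · nlinarith
      · nlinarith
      · exact h1
    have hr0 : 0 < r := by nlinarith
    set t : ℝ := (p + r) / 2 with ht
    have ht1 : 1 ≤ t := by nlinarith [sq_nonneg (p - r)]
    set u : ℝ := Real.sqrt (t^2 - 1) with hu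
    have hu2 : u^2 = t^2 - 1 := Real.sq_sqrt (by nlinarith)
    have hu0 : 0 ≤ u := Real.sqrt_nonneg _
    rcases eq_or_lt_of_le hu0 with hueq | hupos
    · -- u = 0 : g = -1, A = 0
      have ht' : t = 1 := by nlinarith
      have hq0 : q = 0 := by nlinarith [sq_nonneg (p - r), sq_nonneg q]
      have hpr1 : p = 1 ∧ r = 1 := by constructor <;> nlinarith [sq_nonneg (p - r)]
      refine ⟨0, ⟨by simp, by simp⟩, ?_⟩
      rw [NormedSpace.exp_zero, hgeta, hq0, hpr1.1, hpr1.2]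
      ext i j
      fin_cases i <;> fin_cases j <;> simp [Matrix.one_apply]
    · -- u > 0
      have htu : 1 < t + u := by linarith
      set s : ℝ := Real.log (t + u) with hsdef
      have hs0 : 0 < s := Real.log_pos htu
      have hexps : Real.exp s = t + u := Real.exp_log (by linarith)
      have htune : t + u ≠ 0 := by linarith
      have hexpns : Real.exp (-s) = t - u := by
        rw [Real.exp_neg, hexps]
        field_simp
        nlinarith [hu2]
      have hcosh : Real.cosh s = t := by
        rw [Real.cosh_eq, hexps, hexpns]; ring
      have hsinh : Real.sinh s = u := by
        rw [Real.sinh_eq, hexps, hexpns]; ring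
      have hune : u ≠ 0 := ne_of_gt hupos
      have hsne : s ≠ 0 := ne_of_gt hs0
      set x : ℝ := (p - r) / 2 * (s / u) with hx
      set y : ℝ := q * (s / u) with hy
      have hkey : (p - r)^2 / 4 + q^2 = u^2 := by rw [hu2, ht]; linear_combination -hdet'
      have hxy : x^2 + y^2 = s^2 := by
        rw [hx, hy]
        field_simp
        linear_combination 4 * hkey
      refine ⟨!![x, y; y, -x], ⟨?_, ?_⟩, ?_⟩
      · ext i j; fin_cases i <;> fin_cases j <;> simp [Matrix.transpose_apply]
      · simp [Matrix.trace_fin_two]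
      · rw [exp_key x y s hs0 hxy, hgeta, hsinh, hcosh]
        have h1 : x * (u / s) = (p - r) / 2 := by rw [hx]; field_simp
        have h2 : y * (u / s) = q := by rw [hy]; field_simp
        ext i j
        fin_cases i <;> fin_cases j <;>
          simp <;> linarith [h1, h2]
  · rintro ⟨A, ⟨hsymA, htrA⟩, rfl⟩
    have hb : A 1 0 = A 0 1 := by
      conv_lhs => rw [← hsymA]
      rfl
    set x : ℝ := A 0 0 with hx
    set y : ℝ := A 0 1 with hy
    have hd : A 1 1 = -x := by
      rw [Matrix.trace_fin_two] at htrA; linarith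
    have hA : A = !![x, y; y, -x] := by
      rw [Matrix.eta_fin_two A, hb, hd]
    rcases eq_or_ne (x^2 + y^2) 0 with h0 | h0
    · have hx0 : x = 0 := by nlinarith [sq_nonneg x, sq_nonneg y]
      have hy0 : y = 0 := by nlinarith [sq_nonneg x, sq_nonneg y]
      have : A = 0 := by rw [hA, hx0, hy0]; ext i j; fin_cases i <;> fin_cases j <;> simp
      rw [this, NormedSpace.exp_zero]
      refine ⟨by simp, ?_, ?_⟩
      · rw [show (-(1 : Matrix (Fin 2) (Fin 2) ℝ)).det = ((-1 : ℝ) • (1 : Matrix (Fin 2) (Fin 2) ℝ)).det by norm_num, Matrix.det_smul]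
        simp
      · simp [Matrix.trace]
    · set s : ℝ := Real.sqrt (x^2 + y^2) with hs
      have hs2 : s^2 = x^2 + y^2 := Real.sq_sqrt (by positivity)
      have hs0 : 0 < s := by
        rw [hs]
        exact Real.sqrt_pos.mpr ((by positivity : (0:ℝ) ≤ x^2+y^2).lt_of_ne (Ne.symm h0))
      rw [hA, exp_key x y s hs0 hs2.symm]
      have hcosh := Real.cosh_pos s
      have hcs : Real.cosh s ^ 2 - Real.sinh s ^ 2 = 1 := Real.cosh_sq_sub_sinh_sq s
      refine ⟨?_, ?_, ?_⟩
      · ext i j; fin_cases i <;> fin_cases j <;> simp [Matrix.transpose_apply]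
      · rw [Matrix.det_fin_two]
        simp only [Matrix.neg_apply, Matrix.cons_val', Matrix.cons_val_zero,
          Matrix.cons_val_one, Matrix.head_cons, Matrix.head_fin_const,
          Matrix.of_apply, Matrix.empty_val', Matrix.cons_val_fin_one]
        have : x^2 * (Real.sinh s / s)^2 + y^2 * (Real.sinh s / s)^2 = Real.sinh s ^2 := by
          field_simp
          nlinarith [hs2]
        nlinarith [this]
      · rw [Matrix.trace_fin_two]
        simp only [Matrix.neg_apply, Matrix.cons_val', Matrix.cons_val_zero,
          Matrix.cons_val_one, Matrix.head_cons, Matrix.head_fin_const,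
          Matrix.of_apply, Matrix.empty_val', Matrix.cons_val_fin_one]
        linarith
end

section
/- For all θ, c, t ∈ ℝ, setting ν = √(1+c²), one has the matrix identity exp(t(cos θ·p1 + sin θ·p2 + c·k))·exp(−t·c·k) = [[α, β], [−conj(β), conj(α)]], where α = cos(ct/2)cos(νt/2) + (c/ν)sin(ct/2)sin(νt/2) + i·((c/ν)cos(ct/2)sin(νt/2) − sin(ct/2)cos(νt/2)) and β = (1/ν)sin(νt/2)·(cos(ct/2 + θ) + i·sin(ct/2 + θ)). -/
set_option maxHeartbeats 1000000

open Matrix Complex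

noncomputable def phiU (U : Matrix (Fin 2) (Fin 2) ℂ) (h : U * U = -1) : ℂ →+* Matrix (Fin 2) (Fin 2) ℂ where
  toFun z := (z.re : ℂ) • 1 + (z.im : ℂ) • U
  map_one' := by simp
  map_mul' z w := by
    simp only [Complex.mul_re, Complex.mul_im]
    push_cast
    rw [add_mul, mul_add, mul_add, smul_mul_smul_comm, smul_mul_smul_comm,
      smul_mul_smul_comm, smul_mul_smul_comm, h]
    simp only [one_mul, mul_one]
    simp only [smul_neg, sub_smul, add_smul]
    abel
  map_zero' := by simp
  map_add' z w := by
    simp only [Complex.add_re, Complex.add_im]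
    push_cast
    simp only [add_smul]
    abel

lemma phiU_cont (U : Matrix (Fin 2) (Fin 2) ℂ) (h : U * U = -1) : Continuous (phiU U h) := by
  refine Continuous.add ?_ ?_ <;>
    exact (Complex.continuous_ofReal.comp (by continuity)).smul continuous_const

lemma exp_euler (U : Matrix (Fin 2) (Fin 2) ℂ) (h : U * U = -1) (x : ℝ) :
    NormedSpace.exp ((x : ℂ) • U) = (Real.cos x : ℂ) • 1 + (Real.sin x : ℂ) • U := by
  letI : SeminormedRing (Matrix (Fin 2) (Fin 2) ℂ) := Matrix.linftyOpSemiNormedRing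
  letI : NormedRing (Matrix (Fin 2) (Fin 2) ℂ) := Matrix.linftyOpNormedRing
  letI : NormedAlgebra ℝ (Matrix (Fin 2) (Fin 2) ℂ) := Matrix.linftyOpNormedAlgebra
  have h1 : (x : ℂ) • U = phiU U h ((x : ℝ) * Complex.I) := by
    simp [phiU]
  rw [h1]
  erw [← NormedSpace.map_exp (phiU U h) (phiU_cont U h), ← Complex.exp_eq_exp_ℂ]
  simp only [phiU, RingHom.coe_mk, MonoidHom.coe_mk, OneHom.coe_mk,
    Complex.exp_ofReal_mul_I_re, Complex.exp_ofReal_mul_I_im]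

noncomputable def p1 : Matrix (Fin 2) (Fin 2) ℂ := (1/2 : ℂ) • !![0, 1; -1, 0]
noncomputable def p2 : Matrix (Fin 2) (Fin 2) ℂ := (1/2 : ℂ) • !![0, I; I, 0]
noncomputable def k : Matrix (Fin 2) (Fin 2) ℂ := (1/2 : ℂ) • !![I, 0; 0, -I]

/-- Explicit expression of the geodesics of the `k ⊕ p` problem on `SU(2)`. -/
theorem su2_geodesic_formula (θ c t : ℝ) :
    NormedSpace.exp ((t : ℂ) • ((Real.cos θ : ℂ) • p1 + (Real.sin θ : ℂ) • p2 + (c : ℂ) • k))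
        * NormedSpace.exp ((-(t * c) : ℂ) • k) =
      let ν : ℝ := Real.sqrt (1 + c ^ 2)
      let α : ℂ :=
        (↑(Real.cos (c * t / 2) * Real.cos (ν * t / 2)
            + c / ν * Real.sin (c * t / 2) * Real.sin (ν * t / 2)) : ℂ)
          + I * (↑(c / ν * Real.cos (c * t / 2) * Real.sin (ν * t / 2)
            - Real.sin (c * t / 2) * Real.cos (ν * t / 2)) : ℂ)
      let β : ℂ :=
        (↑(1 / ν * Real.sin (ν * t / 2)) : ℂ)
          * ((↑(Real.cos (c * t / 2 + θ)) : ℂ) + I * (↑(Real.sin (c * t / 2 + θ)) : ℂ))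
      !![α, β; -(starRingEnd ℂ) β, (starRingEnd ℂ) α] := by
  have hc : (0:ℝ) < 1 + c ^ 2 := by positivity
  set ν : ℝ := Real.sqrt (1 + c ^ 2) with hνdef
  have hν : 0 < ν := Real.sqrt_pos.mpr hc
  have hν2 : ν ^ 2 = 1 + c ^ 2 := Real.sq_sqrt hc.le
  have hνC : (ν : ℂ) ≠ 0 := by exact_mod_cast hν.ne'
  have hν2C : (ν : ℂ) ^ 2 = 1 + (c : ℂ) ^ 2 := by exact_mod_cast hν2
  set M : Matrix (Fin 2) (Fin 2) ℂ :=
    !![(c:ℂ)*I, (Real.cos θ:ℂ) + (Real.sin θ:ℂ)*I;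
       -(Real.cos θ:ℂ) + (Real.sin θ:ℂ)*I, -(c:ℂ)*I] with hMdef
  set Ua : Matrix (Fin 2) (Fin 2) ℂ := ((ν:ℂ))⁻¹ • M with hUadef
  have hM : M * M = (-((ν:ℂ))^2) • 1 := by
    rw [hν2C]
    ext i j
    fin_cases i <;> fin_cases j <;>
      simp [hMdef, Matrix.mul_apply, Fin.sum_univ_two, Matrix.one_apply, Complex.ext_iff,
        ← Complex.ofReal_pow, Complex.ofReal_re, Complex.ofReal_im, Complex.cos_ofReal_re,
        Complex.sin_ofReal_re, Complex.cos_ofReal_im, Complex.sin_ofReal_im] <;>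
      (constructor <;> nlinarith [Real.sin_sq_add_cos_sq θ])
  have hUa : Ua * Ua = -1 := by
    rw [hUadef, smul_mul_smul_comm, hM, smul_smul]
    rw [show ((ν:ℂ))⁻¹ * ((ν:ℂ))⁻¹ * (-((ν:ℂ))^2) = -1 by field_simp]
    simp
  set V : Matrix (Fin 2) (Fin 2) ℂ := !![I, 0; 0, -I] with hVdef
  have hV : V * V = -1 := by
    ext i j
    fin_cases i <;> fin_cases j <;>
      simp [hVdef, Matrix.mul_apply, Fin.sum_univ_two, Matrix.one_apply]
  have hA : (t : ℂ) • ((Real.cos θ : ℂ) • p1 + (Real.sin θ : ℂ) • p2 + (c : ℂ) • k)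
      = ((ν * t / 2 : ℝ) : ℂ) • Ua := by
    ext i j
    fin_cases i <;> fin_cases j <;>
      simp [p1, p2, k, hUadef, hMdef] <;> push_cast <;> field_simp <;> ring
  have hk : (-(t * c) : ℂ) • k = ((-(c * t / 2) : ℝ) : ℂ) • V := by
    ext i j
    fin_cases i <;> fin_cases j <;> simp [k, hVdef] <;> push_cast <;> ring
  rw [hA, hk, exp_euler _ hUa, exp_euler _ hV]
  have hUV : Ua * V = ((ν:ℂ))⁻¹ • !![-(c:ℂ), (Real.sin θ:ℂ) - (Real.cos θ:ℂ)*I;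
      -(Real.sin θ:ℂ) - (Real.cos θ:ℂ)*I, -(c:ℂ)] := by
    rw [hUadef, Matrix.smul_mul]
    congr 1
    ext i j
    fin_cases i <;> fin_cases j <;>
      simp [hMdef, hVdef, Matrix.mul_apply, Fin.sum_univ_two, Complex.ext_iff] <;> ring
  rw [add_mul, mul_add, mul_add, smul_mul_smul_comm, smul_mul_smul_comm, smul_mul_smul_comm,
    smul_mul_smul_comm]
  simp only [one_mul, mul_one]
  rw [hUV]
  ext i j
  fin_cases i <;> fin_cases j <;>
    simp only [Real.cos_neg, Real.sin_neg, Real.cos_add, Real.sin_add, hUadef, hMdef, hVdef,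
      ← Complex.ofReal_inv,
      Matrix.add_apply, Matrix.smul_apply, Matrix.one_apply, Matrix.cons_val', Matrix.cons_val_zero,
      Matrix.cons_val_one, Matrix.head_cons, Matrix.empty_val',
      Matrix.cons_val_fin_one, Fin.isValue, Fin.zero_eta, Fin.mk_one, smul_eq_mul,
      Matrix.of_apply, map_add, _root_.map_mul, map_sub, map_neg, _root_.map_one, Complex.conj_ofReal,
      Complex.conj_I, if_true, if_false, one_ne_zero, zero_ne_one, ite_true, ite_false,
      mul_zero, zero_mul, mul_one, add_zero, zero_add, neg_neg, mul_neg, neg_mul] <;>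
    rw [Complex.ext_iff] <;>
    constructor <;>
    simp only [Complex.add_re, Complex.add_im, Complex.mul_re, Complex.mul_im, Complex.sub_re,
      Complex.sub_im, Complex.neg_re, Complex.neg_im, Complex.ofReal_re, Complex.ofReal_im,
      Complex.I_re, Complex.I_im, Complex.inv_re, Complex.inv_im, Complex.one_re, Complex.one_im,
      Complex.zero_re, Complex.zero_im, Complex.normSq_ofReal, Complex.div_re, Complex.div_im] <;>
    (try simp only [Matrix.vecHead, Matrix.vecTail, Complex.neg_re, Complex.neg_im, Complex.mul_re,
      Complex.mul_im, Complex.ofReal_re, Complex.ofReal_im, Complex.I_re, Complex.I_im,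
      Complex.add_re, Complex.add_im, Complex.sub_re, Complex.sub_im, Complex.zero_re,
      Complex.zero_im]) <;>
    field_simp <;>
    ring
end

section
/- For all θ, c, t ∈ ℝ, setting ν = √(1+c²), K1 = (1+(1+2c²)cos(νt))/(2(1+c²)), K2 = (1−cos(νt))/(2(1+c²)), K3 = sin(νt)/ν, K4 = c(1−cos(νt))/(1+c²), one has the matrix identity exp(t(cos θ·P1 + sin θ·P2 + c·K))·exp(−t·c·K) = M, where M is the real 3×3 matrix with entries M₁₁ = K1·cos(ct)+K2·cos(2θ+ct)+K3·c·sin(ct), M₁₂ = K1·sin(ct)+K2·sin(2θ+ct)−K3·c·cos(ct), M₁₃ = K4·cos θ + K3·sin θ, M₂₁ = −K1·sin(ct)+K2·sin(2θ+ct)+K3·c·cos(ct), M₂₂ = K1·cos(ct)−K2·cos(2θ+ct)+K3·c·sin(ct), M₂₃ = −K3·cos θ + K4·sin θ, M₃₁ = K4·cos(θ+ct)−K3·sin(θ+ct), M₃₂ = K3·cos(θ+ct)+K4·sin(θ+ct), M₃₃ = (cos(νt)+c²)/(1+c²). -/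
set_option maxHeartbeats 10000000

open Matrix Real

attribute [local instance] Matrix.linftyOpNormedRing Matrix.linftyOpNormedAlgebra

noncomputable def P1 : Matrix (Fin 3) (Fin 3) ℝ := !![0, 0, 0; 0, 0, -1; 0, 1, 0]
noncomputable def P2 : Matrix (Fin 3) (Fin 3) ℝ := !![0, 0, 1; 0, 0, 0; -1, 0, 0]
noncomputable def K : Matrix (Fin 3) (Fin 3) ℝ := !![0, -1, 0; 1, 0, 0; 0, 0, 0]

lemma exp_skew (A : Matrix (Fin 3) (Fin 3) ℝ) (ν : ℝ) (hν : ν ≠ 0)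
    (hA : A * A * A = (-(ν^2)) • A) (t : ℝ) :
    NormedSpace.exp (t • A)
      = 1 + (Real.sin (ν*t)/ν) • A + ((1 - Real.cos (ν*t))/ν^2) • (A*A) := by
  set f : ℝ → Matrix (Fin 3) (Fin 3) ℝ :=
    fun s => 1 + (Real.sin (ν*s)/ν) • A + ((1 - Real.cos (ν*s))/ν^2) • (A*A) with hf
  set g : ℝ → Matrix (Fin 3) (Fin 3) ℝ :=
    fun s => NormedSpace.exp ((-s) • A) * f s with hg
  have hexp : ∀ s : ℝ, HasDerivAt (fun u : ℝ => NormedSpace.exp ((-u) • A))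
      (NormedSpace.exp ((-s) • A) * (-A)) s := by
    intro s
    have h := hasDerivAt_exp_smul_const (𝕂 := ℝ) (-A) s
    simp only [smul_neg, ← neg_smul] at h
    exact h
  have hsin : ∀ s : ℝ, HasDerivAt (fun u : ℝ => Real.sin (ν*u)/ν) (Real.cos (ν*s)) s := by
    intro s
    have h1 : HasDerivAt (fun u : ℝ => ν * u) ν s := by
      simpa using (hasDerivAt_id s).const_mul ν
    have h2 := (Real.hasDerivAt_sin (ν*s)).comp s h1
    have h3 := h2.div_const ν
    simpa [mul_div_assoc, mul_div_cancel_right₀ _ hν] using h3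
  have hcos : ∀ s : ℝ, HasDerivAt (fun u : ℝ => (1 - Real.cos (ν*u))/ν^2)
      (Real.sin (ν*s)/ν) s := by
    intro s
    have h1 : HasDerivAt (fun u : ℝ => ν * u) ν s := by
      simpa using (hasDerivAt_id s).const_mul ν
    have h2 := (Real.hasDerivAt_cos (ν*s)).comp s h1
    have h3 := ((h2.const_sub 1).div_const (ν^2))
    exact h3.congr_deriv (by field_simp)
  have hfdiff : ∀ s : ℝ, HasDerivAt f
      (Real.cos (ν*s) • A + (Real.sin (ν*s)/ν) • (A*A)) s := by
    intro s
    have h := (((hsin s).smul_const A).const_add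
      (1 : Matrix (Fin 3) (Fin 3) ℝ)).add ((hcos s).smul_const (A*A))
    exact h
  have hgdiff : ∀ s : ℝ, HasDerivAt g 0 s := by
    intro s
    have h := (hexp s).mul (hfdiff s)
    have key : NormedSpace.exp ((-s) • A) * (-A) * f s
        + NormedSpace.exp ((-s) • A) * (Real.cos (ν*s) • A + (Real.sin (ν*s)/ν) • (A*A))
        = 0 := by
      have hAf : A * f s = Real.cos (ν*s) • A + (Real.sin (ν*s)/ν) • (A*A) := by
        simp only [hf]
        rw [mul_add, mul_add, mul_one, mul_smul_comm, mul_smul_comm, ← mul_assoc, hA]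
        rw [smul_smul]
        have : (1 - Real.cos (ν*s))/ν^2 * (-(ν^2)) = -(1 - Real.cos (ν*s)) := by
          field_simp
        rw [this]
        module
      rw [mul_assoc, neg_mul, ← mul_neg, ← mul_add, ← hAf]
      simp
    rw [key] at h
    exact h
  have hconst : g t = g 0 := by
    apply is_const_of_deriv_eq_zero (fun s => (hgdiff s).differentiableAt)
    intro s; exact (hgdiff s).deriv
  have hg0 : g 0 = 1 := by
    simp [hg, hf, NormedSpace.exp_zero]
  have hcomm : Commute (t • A) ((-t) • A) := by
    rw [Commute, SemiconjBy, smul_mul_smul, smul_mul_smul, mul_comm]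
  have hinv : NormedSpace.exp (t • A) * NormedSpace.exp ((-t) • A) = 1 := by
    erw [← NormedSpace.exp_add_of_commute hcomm]
    simp [← add_smul]
  calc NormedSpace.exp (t • A) = NormedSpace.exp (t • A) * 1 := by rw [mul_one]
    _ = NormedSpace.exp (t • A) * g t := by rw [hconst, hg0]
    _ = (NormedSpace.exp (t • A) * NormedSpace.exp ((-t) • A)) * f t := by
        rw [hg, mul_assoc]
    _ = f t := by rw [hinv, one_mul]

/-- Explicit expression of the geodesics of the `k ⊕ p` problem on `SO(3)`. -/
theorem so3_geodesic_formula (θ c t : ℝ) :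
    NormedSpace.exp (t • (Real.cos θ • P1 + Real.sin θ • P2 + c • K))
        * NormedSpace.exp ((-(t * c)) • K) =
      let ν : ℝ := Real.sqrt (1 + c ^ 2)
      let K1 : ℝ := (1 + (1 + 2 * c ^ 2) * Real.cos (ν * t)) / (2 * (1 + c ^ 2))
      let K2 : ℝ := (1 - Real.cos (ν * t)) / (2 * (1 + c ^ 2))
      let K3 : ℝ := Real.sin (ν * t) / ν
      let K4 : ℝ := c * (1 - Real.cos (ν * t)) / (1 + c ^ 2)
      !![K1 * Real.cos (c * t) + K2 * Real.cos (2 * θ + c * t) + K3 * c * Real.sin (c * t),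
         K1 * Real.sin (c * t) + K2 * Real.sin (2 * θ + c * t) - K3 * c * Real.cos (c * t),
         K4 * Real.cos θ + K3 * Real.sin θ;
         -K1 * Real.sin (c * t) + K2 * Real.sin (2 * θ + c * t) + K3 * c * Real.cos (c * t),
         K1 * Real.cos (c * t) - K2 * Real.cos (2 * θ + c * t) + K3 * c * Real.sin (c * t),
         -K3 * Real.cos θ + K4 * Real.sin θ;
         K4 * Real.cos (θ + c * t) - K3 * Real.sin (θ + c * t),
         K3 * Real.cos (θ + c * t) + K4 * Real.sin (θ + c * t),
         (Real.cos (ν * t) + c ^ 2) / (1 + c ^ 2)] := by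
  have hpos : (0:ℝ) < 1 + c ^ 2 := by positivity
  set ν : ℝ := Real.sqrt (1 + c ^ 2) with hνdef
  have hν2 : ν ^ 2 = 1 + c ^ 2 := Real.sq_sqrt hpos.le
  have hνpos : 0 < ν := Real.sqrt_pos.2 hpos
  have hν : ν ≠ 0 := hνpos.ne'
  have hsc : Real.sin θ ^ 2 + Real.cos θ ^ 2 = 1 := Real.sin_sq_add_cos_sq θ
  set γ : ℝ := Real.cos θ with hγ
  set s : ℝ := Real.sin θ with hs
  set a : ℝ := Real.sin (ν * t) / ν with ha
  set b : ℝ := (1 - Real.cos (ν * t)) / (1 + c ^ 2) with hb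
  have hA : γ • P1 + s • P2 + c • K
      = !![0, -c, s; c, 0, -γ; -s, γ, 0] := by
    ext i j
    fin_cases i <;> fin_cases j <;>
      simp [P1, P2, K, Matrix.vecHead, Matrix.vecTail]
  have hMM : (!![0, -c, s; c, 0, -γ; -s, γ, 0] : Matrix (Fin 3) (Fin 3) ℝ)
      * !![0, -c, s; c, 0, -γ; -s, γ, 0]
      = !![-c^2 - s^2, s*γ, c*γ; γ*s, -c^2 - γ^2, c*s; γ*c, s*c, -s^2 - γ^2] := by
    rw [Matrix.mul_fin_three]
    ext i j
    fin_cases i <;> fin_cases j <;>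
      simp [Matrix.vecHead, Matrix.vecTail] <;> ring
  have hA3 : (γ • P1 + s • P2 + c • K) * (γ • P1 + s • P2 + c • K)
      * (γ • P1 + s • P2 + c • K) = (-(ν ^ 2)) • (γ • P1 + s • P2 + c • K) := by
    rw [hA, hMM, Matrix.mul_fin_three]
    ext i j
    fin_cases i <;> fin_cases j <;>
      simp [hν2, Matrix.vecHead, Matrix.vecTail] <;>
      first
        | ring1
        | linear_combination (-(1 - Real.cos (ν*t)) * (1)) * hsc
        | linear_combination ((1 - Real.cos (ν*t)) * (1)) * hsc
        | linear_combination (-(1 - Real.cos (ν*t)) * (2)) * hsc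
        | linear_combination ((1 - Real.cos (ν*t)) * (2)) * hsc
        | linear_combination (-(1 - Real.cos (ν*t)) * (ν)) * hsc
        | linear_combination ((1 - Real.cos (ν*t)) * (ν)) * hsc
        | linear_combination (-(1 - Real.cos (ν*t)) * ((1+c^2))) * hsc
        | linear_combination ((1 - Real.cos (ν*t)) * ((1+c^2))) * hsc
        | linear_combination (-(1 - Real.cos (ν*t)) * (2*(1+c^2))) * hsc
        | linear_combination ((1 - Real.cos (ν*t)) * (2*(1+c^2))) * hsc
        | linear_combination (-(1 - Real.cos (ν*t)) * (ν^2*(1+c^2)^2)) * hsc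
        | linear_combination ((1 - Real.cos (ν*t)) * (ν^2*(1+c^2)^2)) * hsc
        | linear_combination (-(1 - Real.cos (ν*t)) * (2*ν^2*(1+c^2)^2)) * hsc
        | linear_combination ((1 - Real.cos (ν*t)) * (2*ν^2*(1+c^2)^2)) * hsc
        | linear_combination c * hsc
        | linear_combination (-c) * hsc
        | linear_combination s * hsc
        | linear_combination (-s) * hsc
        | linear_combination γ * hsc
        | linear_combination (-γ) * hsc
  have hKK : K * K = !![-1, 0, 0; 0, -1, 0; 0, 0, 0] := by
    rw [show K = !![0, -1, 0; 1, 0, 0; 0, 0, 0] from rfl, Matrix.mul_fin_three]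
    norm_num
  have hK3 : K * K * K = (-((1:ℝ) ^ 2)) • K := by
    rw [hKK, show K = !![0, -1, 0; 1, 0, 0; 0, 0, 0] from rfl, Matrix.mul_fin_three]
    ext i j
    fin_cases i <;> fin_cases j <;>
      simp [Matrix.vecHead, Matrix.vecTail]
  have hE1 : NormedSpace.exp (t • (γ • P1 + s • P2 + c • K))
      = !![1 + b*(-c^2 - s^2), -(a*c) + b*(s*γ), a*s + b*(c*γ);
           a*c + b*(γ*s), 1 + b*(-c^2 - γ^2), -(a*γ) + b*(c*s);
           -(a*s) + b*(γ*c), a*γ + b*(s*c), 1 + b*(-s^2 - γ^2)] := by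
    rw [exp_skew _ ν hν hA3 t, hA, hMM]
    ext i j
    fin_cases i <;> fin_cases j <;>
      simp [Matrix.one_apply, ha, hb, ← hν2, Matrix.vecHead, Matrix.vecTail] <;> ring
  have hE2 : NormedSpace.exp ((-(t * c)) • K)
      = !![Real.cos (c*t), Real.sin (c*t), 0;
           -Real.sin (c*t), Real.cos (c*t), 0; 0, 0, 1] := by
    rw [exp_skew K 1 one_ne_zero hK3 (-(t * c)), hKK,
      show K = !![0, -1, 0; 1, 0, 0; 0, 0, 0] from rfl]
    ext i j
    fin_cases i <;> fin_cases j <;>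
      simp [Matrix.one_apply, Real.sin_neg, Real.cos_neg, mul_comm t c,
        Matrix.vecHead, Matrix.vecTail] <;> ring
  rw [hE1, hE2, Matrix.mul_fin_three]
  ext i j
  fin_cases i <;> fin_cases j <;>
    · simp [Matrix.vecHead, Matrix.vecTail, Real.cos_add, Real.sin_add,
        Real.cos_two_mul, Real.sin_two_mul, ha, hb, -one_div, -neg_add_rev]
      field_simp
      try rw [mul_comm t c]
      first
        | ring1
        | linear_combination (-(1 - Real.cos (ν*t)) * (1)) * hsc
        | linear_combination ((1 - Real.cos (ν*t)) * (1)) * hsc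
        | linear_combination (-(1 - Real.cos (ν*t)) * (2)) * hsc
        | linear_combination ((1 - Real.cos (ν*t)) * (2)) * hsc
        | linear_combination (-(1 - Real.cos (ν*t)) * (ν)) * hsc
        | linear_combination ((1 - Real.cos (ν*t)) * (ν)) * hsc
        | linear_combination (-(1 - Real.cos (ν*t)) * ((1+c^2))) * hsc
        | linear_combination ((1 - Real.cos (ν*t)) * ((1+c^2))) * hsc
        | linear_combination (-(1 - Real.cos (ν*t)) * (2*(1+c^2))) * hsc
        | linear_combination ((1 - Real.cos (ν*t)) * (2*(1+c^2))) * hsc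
        | linear_combination (-(1 - Real.cos (ν*t)) * (ν^2*(1+c^2)^2)) * hsc
        | linear_combination ((1 - Real.cos (ν*t)) * (ν^2*(1+c^2)^2)) * hsc
        | linear_combination (-(1 - Real.cos (ν*t)) * (2*ν^2*(1+c^2)^2)) * hsc
        | linear_combination ((1 - Real.cos (ν*t)) * (2*ν^2*(1+c^2)^2)) * hsc
        | linear_combination (-(Real.cos (c*t)) * (1 - Real.cos (ν*t)) * (2*ν^2*(1+c^2)^2)) * hsc
        | linear_combination ((Real.cos (c*t)) * (1 - Real.cos (ν*t)) * (2*ν^2*(1+c^2)^2)) * hsc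
        | linear_combination (-(Real.sin (c*t)) * (1 - Real.cos (ν*t)) * (2*ν^2*(1+c^2)^2)) * hsc
        | linear_combination ((Real.sin (c*t)) * (1 - Real.cos (ν*t)) * (2*ν^2*(1+c^2)^2)) * hsc
        | linear_combination (-(Real.cos (c*t)) * (1 - Real.cos (ν*t)) * (ν^2*(1+c^2)^2)) * hsc
        | linear_combination ((Real.cos (c*t)) * (1 - Real.cos (ν*t)) * (ν^2*(1+c^2)^2)) * hsc
        | linear_combination (-(Real.sin (c*t)) * (1 - Real.cos (ν*t)) * (ν^2*(1+c^2)^2)) * hsc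
        | linear_combination ((Real.sin (c*t)) * (1 - Real.cos (ν*t)) * (ν^2*(1+c^2)^2)) * hsc
        | linear_combination (-(Real.cos (c*t)) * (1 - Real.cos (ν*t)) * (2*ν*(1+c^2))) * hsc
        | linear_combination ((Real.cos (c*t)) * (1 - Real.cos (ν*t)) * (2*ν*(1+c^2))) * hsc
        | linear_combination (-(Real.sin (c*t)) * (1 - Real.cos (ν*t)) * (2*ν*(1+c^2))) * hsc
        | linear_combination ((Real.sin (c*t)) * (1 - Real.cos (ν*t)) * (2*ν*(1+c^2))) * hsc
        | linear_combination (-(Real.cos (c*t)) * (1 - Real.cos (ν*t)) * (ν*(1+c^2))) * hsc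
        | linear_combination ((Real.cos (c*t)) * (1 - Real.cos (ν*t)) * (ν*(1+c^2))) * hsc
        | linear_combination (-(Real.sin (c*t)) * (1 - Real.cos (ν*t)) * (ν*(1+c^2))) * hsc
        | linear_combination ((Real.sin (c*t)) * (1 - Real.cos (ν*t)) * (ν*(1+c^2))) * hsc
        | linear_combination (-(Real.cos (c*t)) * (1 - Real.cos (ν*t)) * (2*(1+c^2))) * hsc
        | linear_combination ((Real.cos (c*t)) * (1 - Real.cos (ν*t)) * (2*(1+c^2))) * hsc
        | linear_combination (-(Real.sin (c*t)) * (1 - Real.cos (ν*t)) * (2*(1+c^2))) * hsc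
        | linear_combination ((Real.sin (c*t)) * (1 - Real.cos (ν*t)) * (2*(1+c^2))) * hsc
        | linear_combination (-(Real.cos (c*t)) * (1 - Real.cos (ν*t)) * ((1+c^2))) * hsc
        | linear_combination ((Real.cos (c*t)) * (1 - Real.cos (ν*t)) * ((1+c^2))) * hsc
        | linear_combination (-(Real.sin (c*t)) * (1 - Real.cos (ν*t)) * ((1+c^2))) * hsc
        | linear_combination ((Real.sin (c*t)) * (1 - Real.cos (ν*t)) * ((1+c^2))) * hsc
        | linear_combination (-(Real.cos (c*t)) * (1 - Real.cos (ν*t)) * (2*ν)) * hsc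
        | linear_combination (-(Real.sin (c*t)) * (1 - Real.cos (ν*t)) * (2*ν)) * hsc
        | done
end

section
/- For all θ, c ∈ ℝ, setting ν = √(1+c²) and t = 2π/ν, one has exp(t(cos θ·p1 + sin θ·p2 + c·k)) = −Id; consequently exp(t(cos θ·p1 + sin θ·p2 + c·k))·exp(−t·c·k) equals the diagonal matrix diag(e^{i(π−ct/2)}, e^{−i(π−ct/2)}), independently of θ. -/
open Matrix Complex

/-- In a complex Banach algebra, if `B ^ 2 = -π² • 1` then `exp B = -1`. -/
theorem exp_eq_neg_one_of_sq {𝔸 : Type*} [NormedRing 𝔸] [NormedAlgebra ℂ 𝔸] [CompleteSpace 𝔸]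
    {B : 𝔸} (h : B ^ 2 = (-(Real.pi : ℂ) ^ 2) • 1) : NormedSpace.exp B = -1 := by
  have heven : ∀ n : ℕ, (((2 * n).factorial : ℂ))⁻¹ • B ^ (2 * n)
      = ((-1 : ℂ) ^ n * (Real.pi : ℂ) ^ (2 * n) / ((2 * n).factorial : ℂ)) • (1 : 𝔸) := by
    intro n
    rw [pow_mul, h, smul_pow, one_pow, smul_smul]
    congr 1
    rw [neg_pow, ← pow_mul]
    ring
  have hodd : ∀ n : ℕ, (((2 * n + 1).factorial : ℂ))⁻¹ • B ^ (2 * n + 1)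
      = (((-1 : ℂ) ^ n * (Real.pi : ℂ) ^ (2 * n + 1) / ((2 * n + 1).factorial : ℂ))
          / (Real.pi : ℂ)) • B := by
    intro n
    rw [pow_succ, pow_mul, h, smul_pow, one_pow, smul_mul_assoc, one_mul, smul_smul]
    congr 1
    rw [neg_pow, ← pow_mul]
    have hπ : (Real.pi : ℂ) ≠ 0 := by
      exact_mod_cast Real.pi_ne_zero
    have hf : (((2 * n + 1).factorial : ℕ) : ℂ) ≠ 0 :=
      Nat.cast_ne_zero.mpr (Nat.factorial_ne_zero _)
    field_simp
    ring
  have hc : HasSum (fun n : ℕ =>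
        ((-1 : ℂ) ^ n * (Real.pi : ℂ) ^ (2 * n) / ((2 * n).factorial : ℂ)) • (1 : 𝔸))
      ((Complex.cos (Real.pi : ℂ)) • (1 : 𝔸)) :=
    (Complex.hasSum_cos (Real.pi : ℂ)).smul_const 1
  have hs : HasSum (fun n : ℕ =>
      (((-1 : ℂ) ^ n * (Real.pi : ℂ) ^ (2 * n + 1) / ((2 * n + 1).factorial : ℂ))
        / (Real.pi : ℂ)) • B)
      ((Complex.sin (Real.pi : ℂ) / (Real.pi : ℂ)) • B) :=
    ((Complex.hasSum_sin (Real.pi : ℂ)).div_const _).smul_const B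
  have hsum : HasSum (fun n : ℕ => ((n.factorial : ℂ))⁻¹ • B ^ n)
      ((Complex.cos (Real.pi : ℂ)) • (1 : 𝔸)
        + (Complex.sin (Real.pi : ℂ) / (Real.pi : ℂ)) • B) := by
    refine HasSum.even_add_odd ?_ ?_
    · simpa only [heven] using hc
    · simpa only [hodd] using hs
  rw [NormedSpace.exp_eq_tsum (𝕂 := ℂ)]
  show (∑' n : ℕ, ((n.factorial : ℂ))⁻¹ • B ^ n) = -1
  rw [hsum.tsum_eq]
  have h1 : Complex.cos (Real.pi : ℂ) = -1 := by
    rw [← Complex.ofReal_cos, Real.cos_pi]; norm_num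
  have h2 : Complex.sin (Real.pi : ℂ) = 0 := by
    rw [← Complex.ofReal_sin, Real.sin_pi]; norm_num
  rw [h1, h2]
  simp

theorem matrix_exp_eq_neg_one_of_sq {B : Matrix (Fin 2) (Fin 2) ℂ}
    (h : B ^ 2 = (-(Real.pi : ℂ) ^ 2) • 1) : NormedSpace.exp B = -1 := by
  letI : SeminormedRing (Matrix (Fin 2) (Fin 2) ℂ) := Matrix.linftyOpSemiNormedRing
  letI : NormedRing (Matrix (Fin 2) (Fin 2) ℂ) := Matrix.linftyOpNormedRing
  letI : NormedAlgebra ℂ (Matrix (Fin 2) (Fin 2) ℂ) := Matrix.linftyOpNormedAlgebra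
  exact exp_eq_neg_one_of_sq h

/-- At time `t = 2π/√(1+c²)` the first factor of the geodesic equals `-Id`, so the
geodesic reaches the diagonal matrix `diag(e^{i(π - ct/2)}, e^{-i(π - ct/2)})`,
independently of `θ`. -/
theorem su2_geodesic_hits_ek (θ c : ℝ) :
    (NormedSpace.exp
        (((2 * Real.pi / Real.sqrt (1 + c ^ 2) : ℝ) : ℂ) •
          ((Real.cos θ : ℂ) • p1 + (Real.sin θ : ℂ) • p2 + (c : ℂ) • k)) = -1) ∧
    (NormedSpace.exp
        (((2 * Real.pi / Real.sqrt (1 + c ^ 2) : ℝ) : ℂ) •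
          ((Real.cos θ : ℂ) • p1 + (Real.sin θ : ℂ) • p2 + (c : ℂ) • k))
      * NormedSpace.exp ((-((2 * Real.pi / Real.sqrt (1 + c ^ 2) : ℝ) * c) : ℂ) • k)
      = diagonal ![Complex.exp (I * (Real.pi - c * (2 * Real.pi / Real.sqrt (1 + c ^ 2)) / 2)),
          Complex.exp (-(I * (Real.pi - c * (2 * Real.pi / Real.sqrt (1 + c ^ 2)) / 2)))]) := by
  set t : ℝ := 2 * Real.pi / Real.sqrt (1 + c ^ 2) with ht
  have hA : ((t : ℂ) • ((Real.cos θ : ℂ) • p1 + (Real.sin θ : ℂ) • p2 + (c : ℂ) • k)) ^ 2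
      = (-(Real.pi : ℂ) ^ 2) • 1 := by
    have hsq : ((Real.cos θ : ℂ) • p1 + (Real.sin θ : ℂ) • p2 + (c : ℂ) • k) ^ 2
        = (-(1 + (c : ℂ) ^ 2) / 4) • 1 := by
      have htrigR : ((Real.cos θ : ℂ)) ^ 2 + ((Real.sin θ : ℂ)) ^ 2 = 1 := by
        norm_cast
        exact Real.cos_sq_add_sin_sq θ
      have htrigC : Complex.cos (θ : ℂ) ^ 2 + Complex.sin (θ : ℂ) ^ 2 = 1 :=
        Complex.cos_sq_add_sin_sq _
      ext i j
      fin_cases i <;> fin_cases j <;>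
        simp [p1, p2, k, pow_two, Matrix.mul_apply, Fin.sum_univ_two, Matrix.one_apply] <;>
        simp only [← Complex.ofReal_cos, ← Complex.ofReal_sin] <;>
        ring_nf <;>
        simp only [Complex.I_sq] <;>
        first
          | linear_combination ((1 : ℂ) / 4) * htrigR
          | linear_combination (-(1 : ℂ) / 4) * htrigR
          | linear_combination ((1 : ℂ) / 2) * htrigR
          | linear_combination (-(1 : ℂ) / 2) * htrigR
    have ht2 : (t : ℂ) ^ 2 * ((1 + (c : ℂ) ^ 2) / 4) = (Real.pi : ℂ) ^ 2 := by
      have h0 : (0 : ℝ) ≤ 1 + c ^ 2 := by positivity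
      have h1 : Real.sqrt (1 + c ^ 2) ≠ 0 := by positivity
      have : (t : ℝ) ^ 2 * ((1 + c ^ 2) / 4) = Real.pi ^ 2 := by
        rw [ht, div_pow, Real.sq_sqrt h0]
        field_simp
        ring
      exact_mod_cast this
    rw [smul_pow, hsq, smul_smul]
    congr 1
    rw [neg_div, mul_neg, ← ht2]
    try ring
  have hexp1 : NormedSpace.exp
      (((t : ℝ) : ℂ) • ((Real.cos θ : ℂ) • p1 + (Real.sin θ : ℂ) • p2 + (c : ℂ) • k)) = -1 :=
    matrix_exp_eq_neg_one_of_sq hA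
  refine ⟨hexp1, ?_⟩
  rw [hexp1]
  have hk : ((-((t : ℝ) * c) : ℂ)) • k
      = diagonal ![-((t : ℝ) * c) * I / 2, ((t : ℝ) * c) * I / 2] := by
    ext i j
    fin_cases i <;> fin_cases j <;> simp [k, Matrix.diagonal] <;> ring
  rw [hk, Matrix.exp_diagonal]
  have hdiag : (NormedSpace.exp (![-((t : ℝ) * c) * I / 2, ((t : ℝ) * c) * I / 2]))
      = ![Complex.exp (-((t : ℝ) * c) * I / 2), Complex.exp (((t : ℝ) * c) * I / 2)] := by
    funext i
    fin_cases i <;> simp [← Complex.exp_eq_exp_ℂ]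
  rw [hdiag, neg_one_mul]
  have hc2 : ((2 : ℂ) * (Real.pi : ℂ) / ((Real.sqrt (1 + c ^ 2) : ℝ) : ℂ)) = ((t : ℝ) : ℂ) := by
    rw [ht]
    push_cast
    ring
  rw [hc2]
  have e1 : Complex.exp (I * ((Real.pi : ℂ) - (c : ℂ) * ((t : ℝ) : ℂ) / 2))
      = -Complex.exp (-((t : ℝ) * c : ℂ) * I / 2) := by
    rw [show I * ((Real.pi : ℂ) - (c : ℂ) * ((t : ℝ) : ℂ) / 2)
        = (Real.pi : ℂ) * I + (-((t : ℝ) * c : ℂ)) * I / 2 by push_cast; ring,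
      Complex.exp_add, Complex.exp_pi_mul_I]
    push_cast
    ring
  have e2 : Complex.exp (-(I * ((Real.pi : ℂ) - (c : ℂ) * ((t : ℝ) : ℂ) / 2)))
      = -Complex.exp ((((t : ℝ) * c) : ℂ) * I / 2) := by
    rw [show -(I * ((Real.pi : ℂ) - (c : ℂ) * ((t : ℝ) : ℂ) / 2))
        = -((Real.pi : ℂ) * I) + (((t : ℝ) * c) : ℂ) * I / 2 by push_cast; ring,
      Complex.exp_add, Complex.exp_neg, Complex.exp_pi_mul_I]
    push_cast
    field_simp
  rw [e1, e2, Matrix.diagonal_neg]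
  ext i j
  fin_cases i <;> fin_cases j <;> simp [Matrix.diagonal]
end

section
/- For every a ∈ (0, 2π) and every θ ∈ ℝ, setting c = (π−a)/√(a(2π−a)) and t = 2√(a(2π−a)), one has exp(t(cos θ·p1 + sin θ·p2 + c·k))·exp(−t·c·k) = diag(e^{ia}, e^{−ia}); in particular the left-hand side is independent of θ. -/
open Matrix Complex

lemma exp_diag2 (x y : ℂ) :
    NormedSpace.exp (diagonal ![x, y] : Matrix (Fin 2) (Fin 2) ℂ)
      = diagonal ![Complex.exp x, Complex.exp y] := by
  rw [Matrix.exp_diagonal, Pi.exp_def]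
  have h : (fun i => NormedSpace.exp (![x, y] i)) = ![Complex.exp x, Complex.exp y] := by
    funext i; fin_cases i <;> simp [Complex.exp_eq_exp_ℂ]
  rw [h]

/-- For every `a ∈ (0, 2π)` and every `θ`, with `c = (π - a)/√(a(2π - a))` and
`t = 2√(a(2π - a))`, the geodesic at time `t` reaches `diag(e^{ia}, e^{-ia})`,
independently of `θ`. -/
theorem su2_geodesics_reach_ek (a : ℝ) (ha : 0 < a) (ha' : a < 2 * Real.pi) (θ : ℝ) :
    NormedSpace.exp
        (((2 * Real.sqrt (a * (2 * Real.pi - a)) : ℝ) : ℂ) •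
          ((Real.cos θ : ℂ) • p1 + (Real.sin θ : ℂ) • p2
            + (((Real.pi - a) / Real.sqrt (a * (2 * Real.pi - a)) : ℝ) : ℂ) • k))
      * NormedSpace.exp
        ((-((2 * Real.sqrt (a * (2 * Real.pi - a))) *
            ((Real.pi - a) / Real.sqrt (a * (2 * Real.pi - a)))) : ℝ) • k : Matrix _ _ ℂ)
      = diagonal ![Complex.exp (I * a), Complex.exp (-(I * a))] := by
  set s : ℝ := Real.sqrt (a * (2 * Real.pi - a)) with hs_def
  have hprod : 0 < a * (2 * Real.pi - a) := by nlinarith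
  have hs : 0 < s := Real.sqrt_pos.mpr hprod
  have hs2 : (s : ℝ) ^ 2 = a * (2 * Real.pi - a) := Real.sq_sqrt hprod.le
  have hsne : (s : ℂ) ≠ 0 := by exact_mod_cast hs.ne'
  -- the first exponent
  set z : ℂ := (s : ℂ) * Complex.exp (θ * I) with hz_def
  have hzne : z ≠ 0 := mul_ne_zero hsne (Complex.exp_ne_zero _)
  set X : Matrix (Fin 2) (Fin 2) ℂ :=
    !![((Real.pi - a : ℝ) : ℂ) * I, z; -(s : ℂ) * Complex.exp (-θ * I), -(((Real.pi - a : ℝ) : ℂ) * I)] with hX_def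
  have hXeq : (((2 * s : ℝ) : ℂ) •
      ((Real.cos θ : ℂ) • p1 + (Real.sin θ : ℂ) • p2
        + (((Real.pi - a) / s : ℝ) : ℂ) • k)) = X := by
    have hdiv : (((Real.pi - a) / s : ℝ) : ℂ) = ((Real.pi - a : ℝ) : ℂ) / (s : ℂ) := by
      push_cast; ring
    have hE : Complex.exp (-((θ:ℂ) * I)) = Complex.cos θ - Complex.sin θ * I := by
      rw [show -((θ:ℂ) * I) = (-θ:ℂ) * I by ring, Complex.exp_mul_I]
      simp only [Complex.cos_neg, Complex.sin_neg]
      ring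
    ext i j
    fin_cases i <;> fin_cases j <;>
      simp [p1, p2, k, hX_def, hz_def, hdiv, hE, Complex.exp_mul_I,
        Complex.ofReal_cos, Complex.ofReal_sin]
    all_goals field_simp
    all_goals try rw [hE]
    all_goals ring
  -- eigenvector matrix
  set U : Matrix (Fin 2) (Fin 2) ℂ :=
    !![z, z; (a : ℂ) * I, -((2 * Real.pi - a : ℝ) : ℂ) * I] with hU_def
  have hdetU : U.det = -2 * Real.pi * I * z := by
    simp [hU_def, Matrix.det_fin_two_of]
    ring
  have hUunit : IsUnit U.det := by
    rw [hdetU]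
    exact (IsUnit.mul (by simp [Real.pi_ne_zero, Complex.I_ne_zero] : IsUnit (-2 * (Real.pi:ℂ) * I)) hzne.isUnit)
  set D : Matrix (Fin 2) (Fin 2) ℂ := diagonal ![(Real.pi : ℂ) * I, -((Real.pi : ℂ) * I)] with hD_def
  have hXU : X * U = U * D := by
    have hs2' : (s : ℂ) ^ 2 = (a : ℂ) * (2 * (Real.pi : ℂ) - a) := by
      exact_mod_cast congrArg (fun x : ℝ => (x : ℂ)) hs2
    have hzz : Complex.exp (-((θ:ℂ) * I)) * z = (s:ℂ) := by
      rw [hz_def]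
      rw [show Complex.exp (-((θ:ℂ) * I)) * ((s:ℂ) * Complex.exp (θ * I))
          = (s:ℂ) * (Complex.exp (-((θ:ℂ) * I)) * Complex.exp (θ * I)) by ring]
      rw [← Complex.exp_add]
      simp
    ext i j
    fin_cases i <;> fin_cases j <;>
      simp [hX_def, hU_def, hD_def, Matrix.mul_apply, Fin.sum_univ_two]
    · push_cast; ring
    · push_cast; ring
    · push_cast
      linear_combination (-(s:ℂ)) * hzz + ((a:ℂ)^2 - 2*(Real.pi:ℂ)*(a:ℂ)) * Complex.I_sq
        - hs2'
    · push_cast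
      linear_combination (-(s:ℂ)) * hzz + ((a:ℂ)^2 - 2*(Real.pi:ℂ)*(a:ℂ)) * Complex.I_sq
        - hs2'
  -- X is conjugate to D
  have hUinv : U * U⁻¹ = 1 := Matrix.mul_nonsing_inv U hUunit
  have hXconj : X = U * D * U⁻¹ := by
    calc X = X * (U * U⁻¹) := by rw [hUinv, mul_one]
    _ = (X * U) * U⁻¹ := by rw [mul_assoc]
    _ = (U * D) * U⁻¹ := by rw [hXU]
  -- exp X = -1
  have hexpX : NormedSpace.exp X = (-1 : Matrix (Fin 2) (Fin 2) ℂ) := by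
    set V : (Matrix (Fin 2) (Fin 2) ℂ)ˣ := Matrix.nonsingInvUnit U hUunit with hV_def
    have hV : (V : Matrix (Fin 2) (Fin 2) ℂ) = U := rfl
    have hVi : ((V⁻¹ : (Matrix (Fin 2) (Fin 2) ℂ)ˣ) : Matrix (Fin 2) (Fin 2) ℂ) = U⁻¹ := rfl
    have hD : NormedSpace.exp D = (-1 : Matrix (Fin 2) (Fin 2) ℂ) := by
      rw [hD_def, exp_diag2]
      have e1 : Complex.exp ((Real.pi : ℂ) * I) = -1 := Complex.exp_pi_mul_I
      have e2 : Complex.exp (-((Real.pi : ℂ) * I)) = -1 := by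
        rw [Complex.exp_neg, e1]; norm_num
      rw [e1, e2]
      ext i j
      fin_cases i <;> fin_cases j <;> simp [Matrix.diagonal]
    rw [hXconj, ← hV, ← Matrix.coe_units_inv, Matrix.exp_units_conj, hD, mul_neg_one,
      neg_mul, Matrix.coe_units_inv, hV, hUinv]
  -- the second exponential
  have harg2 : ((-((2*s) * ((Real.pi - a)/s)) : ℝ) • k : Matrix (Fin 2) (Fin 2) ℂ)
      = diagonal ![((a - Real.pi : ℝ):ℂ) * I, ((Real.pi - a : ℝ):ℂ) * I] := by
    have h2 : (-((2*s) * ((Real.pi - a)/s)) : ℝ) = -(2*(Real.pi - a)) := by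
      field_simp
    rw [h2]
    ext i j
    fin_cases i <;> fin_cases j <;>
      simp [k, Matrix.diagonal, Complex.real_smul] <;> push_cast <;> ring
  rw [hXeq, hexpX, harg2, exp_diag2]
  have key1 : -Complex.exp (((a - Real.pi : ℝ):ℂ) * I) = Complex.exp (I * a) := by
    rw [show (I * (a:ℂ)) = (Real.pi:ℂ) * I + ((a - Real.pi : ℝ):ℂ) * I by push_cast; ring,
      Complex.exp_add, Complex.exp_pi_mul_I]
    ring
  have key2 : -Complex.exp (((Real.pi - a : ℝ):ℂ) * I) = Complex.exp (-(I * a)) := by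
    rw [show (-(I * (a:ℂ))) = -((Real.pi:ℂ) * I) + ((Real.pi - a : ℝ):ℂ) * I by
        push_cast; ring,
      Complex.exp_add, Complex.exp_neg, Complex.exp_pi_mul_I]
    norm_num
  ext i j
  fin_cases i <;> fin_cases j <;>
    simp [Matrix.diagonal, ← key1, ← key2]
end

section
/- Cylindrical symmetry: let E(θ,c,t) = exp(t(cos θ·p1 + sin θ·p2 + c·k))·exp(−t·c·k), and write E(0,c,t) = [[α, β], [−conj(β), conj(α)]]. Then for every θ ∈ ℝ, E(θ,c,t) = [[α, e^{iθ}β], [−e^{−iθ}conj(β), conj(α)]]. -/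
open Matrix Complex

/-- The sub-Riemannian exponential map on `SU(2)`. -/
noncomputable def E (θ c t : ℝ) : Matrix (Fin 2) (Fin 2) ℂ :=
  NormedSpace.exp ((t : ℂ) • ((Real.cos θ : ℂ) • p1 + (Real.sin θ : ℂ) • p2 + (c : ℂ) • k))
    * NormedSpace.exp ((-(t * c) : ℂ) • k)

/-- Cylindrical symmetry of the geodesics of `SU(2)`. -/
theorem su2_cylindrical_symmetry (c t : ℝ) (α β : ℂ)
    (hE : E 0 c t = !![α, β; -(starRingEnd ℂ) β, (starRingEnd ℂ) α]) (θ : ℝ) :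
    E θ c t = !![α, Complex.exp (I * θ) * β;
      -(Complex.exp (-(I * θ)) * (starRingEnd ℂ) β), (starRingEnd ℂ) α] := by
  set a : ℂ := Complex.exp (I * θ / 2) with ha
  set b : ℂ := Complex.exp (-(I * θ / 2)) with hb
  have hab : a * b = 1 := by rw [ha, hb, ← Complex.exp_add]; simp
  have ha2 : a * a = Complex.exp (I * θ) := by rw [ha, ← Complex.exp_add]; ring_nf
  have hb2 : b * b = Complex.exp (-(I * θ)) := by rw [hb, ← Complex.exp_add]; ring_nf
  have h1 : Complex.cos θ + Complex.sin θ * I = a * a := by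
    rw [ha2, show I * (θ:ℂ) = (θ:ℂ) * I by ring, Complex.exp_mul_I]
  have h2 : Complex.cos θ - Complex.sin θ * I = b * b := by
    rw [hb2, show -(I * (θ:ℂ)) = (-θ:ℂ) * I by ring, Complex.exp_mul_I,
      Complex.cos_neg, Complex.sin_neg]
    ring
  set R : Matrix (Fin 2) (Fin 2) ℂ := !![a, 0; 0, b] with hR
  set R' : Matrix (Fin 2) (Fin 2) ℂ := !![b, 0; 0, a] with hR'
  have hmul : R * R' = 1 := by
    rw [hR, hR']
    ext i j
    fin_cases i <;> fin_cases j <;>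
      simp [Matrix.mul_apply, Fin.sum_univ_two, Matrix.one_apply, hab, mul_comm b a]
  have hmul' : R' * R = 1 := by
    rw [hR, hR']
    ext i j
    fin_cases i <;> fin_cases j <;>
      simp [Matrix.mul_apply, Fin.sum_univ_two, Matrix.one_apply, hab, mul_comm b a]
  have hU : IsUnit R := by
    have := invertibleOfRightInverse R R' hmul
    exact isUnit_of_invertible R
  have hinv : R⁻¹ = R' := Matrix.inv_eq_right_inv hmul
  have key : ((t:ℂ)) • ((Real.cos θ:ℂ) • p1 + (Real.sin θ:ℂ) • p2 + (c:ℂ) • k)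
      = R * (((t:ℂ)) • ((Real.cos 0:ℂ) • p1 + (Real.sin 0:ℂ) • p2 + (c:ℂ) • k)) * R⁻¹ := by
    rw [hinv, hR, hR']
    ext i j
    fin_cases i <;> fin_cases j <;>
        simp [p1, p2, k, Matrix.mul_apply, Fin.sum_univ_two, Real.cos_zero, Real.sin_zero,
          Complex.ofReal_cos, Complex.ofReal_sin]
    · linear_combination (-(t:ℂ) * c * I / 2) * hab
    · linear_combination ((t:ℂ) / 2) * h1
    · linear_combination (-(t:ℂ) / 2) * h2
    · linear_combination (-(t:ℂ) * c * I / 2) * hab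

  have key2 : ((-(t * c) : ℂ)) • k = R * (((-(t * c) : ℂ)) • k) * R⁻¹ := by
    rw [hinv, hR, hR']
    ext i j
    fin_cases i <;> fin_cases j <;>
        simp [k, Matrix.mul_apply, Fin.sum_univ_two]
    · linear_combination (-(t:ℂ) * c * I / 2) * hab
    · linear_combination (-(t:ℂ) * c * I / 2) * hab
  have hEθ : E θ c t = R * E 0 c t * R⁻¹ := by
    have e1 : NormedSpace.exp
        ((t : ℂ) • ((Real.cos θ : ℂ) • p1 + (Real.sin θ : ℂ) • p2 + (c : ℂ) • k))
        = R * NormedSpace.exp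
          ((t : ℂ) • ((Real.cos 0 : ℂ) • p1 + (Real.sin 0 : ℂ) • p2 + (c : ℂ) • k)) * R⁻¹ := by
      rw [key]
      exact Matrix.exp_conj R _ hU
    have e2 : NormedSpace.exp ((-(t * c) : ℂ) • k)
        = R * NormedSpace.exp ((-(t * c) : ℂ) • k) * R⁻¹ := by
      conv_lhs => rw [key2]
      exact Matrix.exp_conj R _ hU
    unfold E
    conv_lhs => rw [e1, e2]
    rw [hinv]
    simp only [Matrix.mul_assoc]
    rw [← Matrix.mul_assoc R' R, hmul', Matrix.one_mul]
  rw [hEθ, hE, hinv, hR, hR']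
  ext i j
  fin_cases i <;> fin_cases j <;>
      simp [Matrix.mul_apply, Fin.sum_univ_two]
  · linear_combination α * hab
  · linear_combination β * ha2
  · linear_combination ((starRingEnd ℂ) β) * hb2
  · linear_combination ((starRingEnd ℂ) α) * hab
end

section
/- Central symmetry: let E(θ,c,t) = exp(t(cos θ·p1 + sin θ·p2 + c·k))·exp(−t·c·k), and write E(θ,c,t) = [[α, β], [−conj(β), conj(α)]]. Then E(θ,−c,t) = [[conj(α), e^{2iθ}conj(β)], [−e^{−2iθ}β, α]]. -/
open Matrix Complex

/-- The diagonal rotation matrix `diag(e^{iθ}, e^{-iθ})` as a unit. -/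
noncomputable def Uθ (θ : ℝ) : (Matrix (Fin 2) (Fin 2) ℂ)ˣ where
  val := !![Complex.exp (I*θ), 0; 0, Complex.exp (-(I*θ))]
  inv := !![Complex.exp (-(I*θ)), 0; 0, Complex.exp (I*θ)]
  val_inv := by
    ext i j; fin_cases i <;> fin_cases j <;>
      simp [Matrix.mul_apply, Fin.sum_univ_two, ← Complex.exp_add]
  inv_val := by
    ext i j; fin_cases i <;> fin_cases j <;>
      simp [Matrix.mul_apply, Fin.sum_univ_two, ← Complex.exp_add]

lemma exp_Iθ (θ : ℝ) : Complex.exp (I*θ) = (Real.cos θ : ℂ) + (Real.sin θ : ℂ) * I := by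
  rw [mul_comm, Complex.exp_mul_I]; push_cast; ring

lemma exp_negIθ (θ : ℝ) : Complex.exp (-(I*θ)) = (Real.cos θ : ℂ) - (Real.sin θ : ℂ) * I := by
  rw [show -(I*(θ:ℂ)) = (-θ:ℂ)*I by ring, Complex.exp_mul_I, Complex.cos_neg, Complex.sin_neg]
  push_cast; ring

lemma conj_exp (M : Matrix (Fin 2) (Fin 2) ℂ) :
    (NormedSpace.exp M).map (starRingEnd ℂ) = NormedSpace.exp (M.map (starRingEnd ℂ)) := by
  have h : ∀ N : Matrix (Fin 2) (Fin 2) ℂ, N.map (starRingEnd ℂ) = (Nᴴ)ᵀ := by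
    intro N; ext i j; simp [Matrix.conjTranspose_apply]
  rw [h, h, ← Matrix.exp_conjTranspose, ← Matrix.exp_transpose]

lemma key1 (θ c t : ℝ) :
    (t : ℂ) • ((Real.cos θ : ℂ) • p1 + (Real.sin θ : ℂ) • p2 + ((-c : ℝ) : ℂ) • k)
      = (Uθ θ).val * (((t : ℂ) • ((Real.cos θ : ℂ) • p1 + (Real.sin θ : ℂ) • p2 + (c : ℂ) • k)).map
          (starRingEnd ℂ)) * ((Uθ θ)⁻¹ : (Matrix (Fin 2) (Fin 2) ℂ)ˣ).val := by
  have h : (Uθ θ).val * (((t : ℂ) • ((Real.cos θ : ℂ) • p1 + (Real.sin θ : ℂ) • p2 + (c : ℂ) • k)).map (starRingEnd ℂ))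
      = ((t : ℂ) • ((Real.cos θ : ℂ) • p1 + (Real.sin θ : ℂ) • p2 + ((-c : ℝ) : ℂ) • k)) * (Uθ θ).val := by
    ext i j
    fin_cases i <;> fin_cases j <;>
      · simp [Uθ, p1, p2, k, Matrix.mul_apply, Fin.sum_univ_two, exp_Iθ, exp_negIθ, Complex.ext_iff]
        try ring_nf
        try simp [Complex.ext_iff]
        try ring
  calc (t : ℂ) • ((Real.cos θ : ℂ) • p1 + (Real.sin θ : ℂ) • p2 + ((-c : ℝ) : ℂ) • k)
      = ((t : ℂ) • ((Real.cos θ : ℂ) • p1 + (Real.sin θ : ℂ) • p2 + ((-c : ℝ) : ℂ) • k)) *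
          ((Uθ θ).val * ((Uθ θ)⁻¹ : (Matrix (Fin 2) (Fin 2) ℂ)ˣ).val) := by
        rw [Units.mul_inv, mul_one]
    _ = _ := by rw [← mul_assoc, ← h]

lemma key2 (θ c t : ℝ) :
    (-((t : ℂ) * ((-c : ℝ) : ℂ))) • k
      = (Uθ θ).val * (((-((t : ℂ) * (c : ℂ))) • k).map (starRingEnd ℂ)) *
          ((Uθ θ)⁻¹ : (Matrix (Fin 2) (Fin 2) ℂ)ˣ).val := by
  have h : (Uθ θ).val * (((-((t : ℂ) * (c : ℂ))) • k).map (starRingEnd ℂ))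
      = ((-((t : ℂ) * ((-c : ℝ) : ℂ))) • k) * (Uθ θ).val := by
    ext i j
    fin_cases i <;> fin_cases j <;>
      · simp [Uθ, k, Matrix.mul_apply, Fin.sum_univ_two, exp_Iθ, exp_negIθ, Complex.ext_iff]
        try ring_nf
        try simp [Complex.ext_iff]
        try ring
  calc (-((t : ℂ) * ((-c : ℝ) : ℂ))) • k
      = ((-((t : ℂ) * ((-c : ℝ) : ℂ))) • k) * ((Uθ θ).val * ((Uθ θ)⁻¹ : (Matrix (Fin 2) (Fin 2) ℂ)ˣ).val) := by
        rw [Units.mul_inv, mul_one]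
    _ = _ := by rw [← mul_assoc, ← h]

/-- Central symmetry of the geodesics of `SU(2)`. -/
theorem su2_central_symmetry (θ c t : ℝ) (α β : ℂ)
    (hE : E θ c t = !![α, β; -(starRingEnd ℂ) β, (starRingEnd ℂ) α]) :
    E θ (-c) t = !![(starRingEnd ℂ) α, Complex.exp (2 * I * θ) * (starRingEnd ℂ) β;
      -(Complex.exp (-(2 * I * θ)) * β), α] := by
  have hmain : E θ (-c) t = (Uθ θ).val * ((E θ c t).map (starRingEnd ℂ)) *
      ((Uθ θ)⁻¹ : (Matrix (Fin 2) (Fin 2) ℂ)ˣ).val := by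
    rw [E, E]
    rw [key1 θ c t, key2 θ c t, Matrix.exp_units_conj, Matrix.exp_units_conj, ← conj_exp, ← conj_exp]
    rw [Matrix.map_mul]
    calc _ = (Uθ θ).val * ((NormedSpace.exp ((t : ℂ) • ((Real.cos θ : ℂ) • p1 + (Real.sin θ : ℂ) • p2 + (c : ℂ) • k))).map (starRingEnd ℂ) *
          ((((Uθ θ)⁻¹ : (Matrix (Fin 2) (Fin 2) ℂ)ˣ).val * (Uθ θ).val) *
            (NormedSpace.exp ((-((t : ℂ) * (c : ℂ))) • k)).map (starRingEnd ℂ))) *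
          ((Uθ θ)⁻¹ : (Matrix (Fin 2) (Fin 2) ℂ)ˣ).val := by
          noncomm_ring
      _ = _ := by rw [Units.inv_mul, one_mul]
  have hab : Complex.exp (I*(θ:ℂ)) * Complex.exp (-(I*(θ:ℂ))) = 1 := by
    rw [← Complex.exp_add]; simp
  have h2 : Complex.exp (2*I*(θ:ℂ)) = Complex.exp (I*(θ:ℂ)) * Complex.exp (I*(θ:ℂ)) := by
    rw [← Complex.exp_add]; ring_nf
  have h2' : Complex.exp (-(2*I*(θ:ℂ))) = Complex.exp (-(I*(θ:ℂ))) * Complex.exp (-(I*(θ:ℂ))) := by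
    rw [← Complex.exp_add]; ring_nf
  rw [hmain, hE]
  ext i j
  fin_cases i <;> fin_cases j <;>
    · simp [Uθ, Matrix.mul_apply, Matrix.vecMul, dotProduct, Fin.sum_univ_two, h2, h2']
      try (first | linear_combination ((starRingEnd ℂ) α) * hab | linear_combination α * hab | ring)
end

section
/- Let p ≥ 2 and q be integers and let ω ∈ ℂ satisfy ω^p = 1. Suppose (α, β) ∈ ℂ² satisfies |α|² + |β|² = 1, Re(α) > 0 and Im(α)²/sin²(π/p) + |β|² < 1, and suppose that the pair (ωα, ω^q β) satisfies the same three conditions. Then ω = 1. -/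
open Complex Real

private lemma aux_cone (a b r s c : ℝ) (h2 : 0 < a) (hr2 : a ^ 2 + b ^ 2 = r ^ 2)
    (hb2 : b ^ 2 < s ^ 2 * r ^ 2) (hc : 0 ≤ c) (hsc : s ^ 2 + c ^ 2 = 1) (hr : 0 < r) :
    c * r < a := by
  nlinarith [mul_nonneg hc hr.le]

private lemma aux_key (a b a' b' r s c x : ℝ) (ha : c * r < a) (ha' : c * r < a')
    (hb2 : b ^ 2 < s ^ 2 * r ^ 2) (hb2' : b' ^ 2 < s ^ 2 * r ^ 2) (hr : 0 < r) (hc : 0 ≤ c)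
    (hx : x * r ^ 2 = a * a' + b * b') : c ^ 2 - s ^ 2 < x := by
  nlinarith [mul_pos (sub_pos.mpr ha) (sub_pos.mpr ha'), sq_nonneg (b + b'),
    mul_nonneg hc hr.le, mul_pos hr hr]

/-- The fundamental domain `E_p` of the lens space `L(p,q)` inside `SU(2)` contains at most one
representative of each equivalence class: if both `(α, β)` and `(ωα, ω^q β)` lie in `E_p`,
where `ω` is a `p`-th root of unity, then `ω = 1`. -/
theorem lens_space_fundamental_domain_unique_rep (p : ℕ) (hp : 2 ≤ p) (q : ℤ) (ω : ℂ)
    (hω : ω ^ p = 1) (α β : ℂ)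
    (h1 : ‖α‖ ^ 2 + ‖β‖ ^ 2 = 1)
    (h2 : 0 < α.re)
    (h3 : α.im ^ 2 / Real.sin (Real.pi / p) ^ 2 + ‖β‖ ^ 2 < 1)
    (h1' : ‖ω * α‖ ^ 2 + ‖ω ^ q * β‖ ^ 2 = 1)
    (h2' : 0 < (ω * α).re)
    (h3' : (ω * α).im ^ 2 / Real.sin (Real.pi / p) ^ 2 + ‖ω ^ q * β‖ ^ 2 < 1) :
    ω = 1 := by
  have hp0 : (0:ℝ) < p := by positivity
  have hp2 : (2:ℝ) ≤ p := by exact_mod_cast hp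
  have hπp : 0 < Real.pi / p := div_pos Real.pi_pos hp0
  have hπp2 : Real.pi / p ≤ Real.pi / 2 := by
    apply div_le_div_of_nonneg_left Real.pi_pos.le (by norm_num) hp2
  set s := Real.sin (Real.pi / p) with hs_def
  set c := Real.cos (Real.pi / p) with hc_def
  have hs : 0 < s := Real.sin_pos_of_pos_of_lt_pi hπp
    (lt_of_le_of_lt hπp2 (by linarith [Real.pi_pos]))
  have hc : 0 ≤ c := Real.cos_nonneg_of_mem_Icc ⟨by linarith, hπp2⟩
  have hsc : s ^ 2 + c ^ 2 = 1 := Real.sin_sq_add_cos_sq _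
  -- ω ≠ 0 and |ω| = 1
  have hω0 : ω ≠ 0 := by
    intro h; rw [h, zero_pow (by omega)] at hω; exact one_ne_zero hω.symm
  have hωabs : ‖ω‖ = 1 := by
    have h : ‖ω‖ ^ p = 1 := by rw [← norm_pow, hω, norm_one]
    rcases lt_trichotomy (‖ω‖) 1 with hlt | heq | hgt
    · have := pow_lt_one₀ (norm_nonneg ω) hlt (by omega : p ≠ 0); linarith
    · exact heq
    · have := one_lt_pow₀ hgt (by omega : p ≠ 0); linarith
  have hα0 : α ≠ 0 := by
    intro h; rw [h] at h2; simp at h2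
  -- notation
  set a := α.re with ha_def
  set b := α.im with hb_def
  set a' := (ω * α).re with ha'_def
  set b' := (ω * α).im with hb'_def
  set r := ‖α‖ with hr_def
  have hr : 0 < r := norm_pos_iff.mpr hα0
  have habβ : ‖ω ^ q * β‖ = ‖β‖ := by
    rw [norm_mul, norm_zpow, hωabs, one_zpow, one_mul]
  have hr2 : a ^ 2 + b ^ 2 = r ^ 2 := by
    rw [hr_def, Complex.sq_norm, Complex.normSq_apply]; ring
  have hr2' : a' ^ 2 + b' ^ 2 = r ^ 2 := by
    have h : ‖ω * α‖ = r := by rw [norm_mul, hωabs, one_mul]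
    rw [← h, Complex.sq_norm, Complex.normSq_apply]; ring
  have hs2 : (0:ℝ) < s ^ 2 := by positivity
  -- cone conditions
  have hb2 : b ^ 2 < s ^ 2 * r ^ 2 := by
    have hd : b ^ 2 / s ^ 2 < r ^ 2 := by linarith
    linarith [(div_lt_iff₀ hs2).mp hd, mul_comm (r ^ 2) (s ^ 2)]
  have hb2' : b' ^ 2 < s ^ 2 * r ^ 2 := by
    rw [habβ] at h3'
    have hd : b' ^ 2 / s ^ 2 < r ^ 2 := by linarith
    linarith [(div_lt_iff₀ hs2).mp hd, mul_comm (r ^ 2) (s ^ 2)]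
  have hmulre : a' = ω.re * a - ω.im * b := Complex.mul_re ω α
  have hmulim : b' = ω.re * b + ω.im * a := Complex.mul_im ω α
  clear_value a b a' b' r s c
  have ha : c * r < a := aux_cone a b r s c h2 hr2 hb2 hc hsc hr
  have ha' : c * r < a' := aux_cone a' b' r s c h2' hr2' hb2' hc hsc hr
  have hxr : ω.re * r ^ 2 = a * a' + b * b' := by
    rw [hmulre, hmulim, ← hr2]; ring
  have hkey : Real.cos (2 * Real.pi / p) < ω.re := by
    have h2c : Real.cos (2 * Real.pi / p) = c ^ 2 - s ^ 2 := by
      rw [show 2 * Real.pi / (p:ℝ) = 2 * (Real.pi / p) by ring, Real.cos_two_mul, ← hc_def]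
      linarith
    rw [h2c]
    exact aux_key a b a' b' r s c ω.re ha ha' hb2 hb2' hr hc hxr
  have hcosarg : Real.cos (Complex.arg ω) = ω.re := by
    rw [Complex.cos_arg hω0, hωabs, div_one]
  have harg : |Complex.arg ω| < 2 * Real.pi / p := by
    by_contra hcon
    push_neg at hcon
    have h1le : Real.cos |Complex.arg ω| ≤ Real.cos (2 * Real.pi / p) :=
      Real.cos_le_cos_of_nonneg_of_le_pi (by positivity) (Complex.abs_arg_le_pi ω) hcon
    rw [Real.cos_abs, hcosarg] at h1le
    linarith
  have hωexp : ω = Complex.exp (Complex.arg ω * Complex.I) := by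
    conv_lhs => rw [← Complex.norm_mul_exp_arg_mul_I ω]
    rw [hωabs, Complex.ofReal_one, one_mul]
  have hexp1 : Complex.exp ((p:ℂ) * ((Complex.arg ω : ℂ) * Complex.I)) = 1 := by
    rw [Complex.exp_nat_mul, ← hωexp, hω]
  rw [Complex.exp_eq_one_iff] at hexp1
  obtain ⟨n, hn⟩ := hexp1
  have hre : (p:ℝ) * Complex.arg ω = n * (2 * Real.pi) := by
    have h := congrArg Complex.im hn
    simpa using h
  have hnabs : |(n:ℝ)| * (2 * Real.pi) < 1 * (2 * Real.pi) := by
    have hlt : |(p:ℝ) * Complex.arg ω| < 2 * Real.pi := by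
      rw [abs_mul, abs_of_pos hp0]
      calc (p:ℝ) * |Complex.arg ω| < p * (2 * Real.pi / p) :=
            mul_lt_mul_of_pos_left harg hp0
        _ = 2 * Real.pi := by field_simp
    rw [hre, abs_mul, abs_of_pos (by positivity : (0:ℝ) < 2 * Real.pi)] at hlt
    linarith
  have hn1 : |(n:ℝ)| < 1 :=
    lt_of_mul_lt_mul_right hnabs (by positivity)
  have hn0 : n = 0 := by
    have h : |n| < 1 := by exact_mod_cast (by rwa [← Int.cast_abs] at hn1 : ((|n|:ℤ):ℝ) < 1)
    have := abs_lt.mp h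
    omega
  have hθ : Complex.arg ω = 0 := by
    rw [hn0] at hre
    push_cast at hre
    have hp0' : (p:ℝ) ≠ 0 := ne_of_gt hp0
    have := mul_eq_zero.mp (by linarith : (p:ℝ) * Complex.arg ω = 0)
    tauto
  rw [hωexp, hθ]
  simp
end

section
/- Let c, d ∈ ℝ and let T satisfy 0 < T < 2π/√(1+c²) and 0 < T < 2π/√(1+d²). If sin(√(1+c²)·T/2)/√(1+c²) = sin(√(1+d²)·T/2)/√(1+d²), then c² = d². -/
open Real

lemma my_mul_cos_lt_sin {u : ℝ} (h0 : 0 < u) (hπ : u < Real.pi) :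
    u * Real.cos u < Real.sin u := by
  rcases lt_or_ge u (Real.pi / 2) with h | h
  · have ht := Real.lt_tan h0 h
    have hc : 0 < Real.cos u := Real.cos_pos_of_mem_Ioo ⟨by linarith [Real.pi_pos], h⟩
    rw [Real.tan_eq_sin_div_cos, lt_div_iff₀ hc] at ht
    linarith
  · have hc : Real.cos u ≤ 0 := Real.cos_nonpos_of_pi_div_two_le_of_le h (by linarith [Real.pi_pos])
    have hs : 0 < Real.sin u := Real.sin_pos_of_pos_of_lt_pi h0 hπ
    nlinarith

lemma my_sinc_strictAntiOn : StrictAntiOn (fun u : ℝ => Real.sin u / u) (Set.Ioc 0 Real.pi) := by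
  apply strictAntiOn_of_deriv_neg (convex_Ioc 0 Real.pi)
  · apply ContinuousOn.div Real.continuousOn_sin continuousOn_id
    intro x hx; exact ne_of_gt hx.1
  · intro x hx
    rw [interior_Ioc] at hx
    obtain ⟨hx0, hxπ⟩ := hx
    have hd : HasDerivAt (fun u : ℝ => Real.sin u / u)
        ((Real.cos x * x - Real.sin x * 1) / x ^ 2) x :=
      (Real.hasDerivAt_sin x).div (hasDerivAt_id x) (ne_of_gt hx0)
    rw [hd.deriv]
    apply div_neg_of_neg_of_pos
    · have := my_mul_cos_lt_sin hx0 hxπ; nlinarith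
    · positivity

/-- If two geodesics of `SU(2)` with parameters `c` and `d` reach at a common time `T`
(before the respective cut times) points with the same value of `|β|`, then `c² = d²`. -/
theorem su2_same_beta_norm_imp_c_sq_eq (c d T : ℝ)
    (hT0 : 0 < T)
    (hTc : T < 2 * Real.pi / Real.sqrt (1 + c ^ 2))
    (hTd : T < 2 * Real.pi / Real.sqrt (1 + d ^ 2))
    (h : Real.sin (Real.sqrt (1 + c ^ 2) * T / 2) / Real.sqrt (1 + c ^ 2)
        = Real.sin (Real.sqrt (1 + d ^ 2) * T / 2) / Real.sqrt (1 + d ^ 2)) :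
    c ^ 2 = d ^ 2 := by
  set a := Real.sqrt (1 + c ^ 2) with ha
  set b := Real.sqrt (1 + d ^ 2) with hb
  have ha0 : 0 < a := Real.sqrt_pos.2 (by positivity)
  have hb0 : 0 < b := Real.sqrt_pos.2 (by positivity)
  have haT : a * T / 2 ∈ Set.Ioc 0 Real.pi := by
    constructor
    · positivity
    · rw [lt_div_iff₀ ha0] at hTc; nlinarith
  have hbT : b * T / 2 ∈ Set.Ioc 0 Real.pi := by
    constructor
    · positivity
    · rw [lt_div_iff₀ hb0] at hTd; nlinarith
  have h' : Real.sin (a * T / 2) * b = Real.sin (b * T / 2) * a := by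
    field_simp at h; rw [mul_comm T b] at h; linarith
  have key : Real.sin (a * T / 2) / (a * T / 2) = Real.sin (b * T / 2) / (b * T / 2) := by
    rw [div_eq_div_iff (by positivity) (by positivity)]
    nlinarith [h']
  have hab : a * T / 2 = b * T / 2 := my_sinc_strictAntiOn.injOn haT hbT key
  have : a = b := by
    field_simp at hab
    linarith
  have := congrArg (· ^ 2) this
  simp only [ha, hb, Real.sq_sqrt (by positivity : (0:ℝ) ≤ 1 + c ^ 2),
    Real.sq_sqrt (by positivity : (0:ℝ) ≤ 1 + d ^ 2)] at this
  linarith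
end

section
/- Let c > 0 and t > 0 satisfy √(1+c²)·t/2 < π. Then c·cos(ct/2)·sin(√(1+c²)·t/2) ≠ √(1+c²)·sin(ct/2)·cos(√(1+c²)·t/2). -/
open Real

lemma key_sin_ineq {x y : ℝ} (hx : 0 < x) (hxy : x < y) (hxpi : x < Real.pi)
    (hy : y < 2 * Real.pi) : x * Real.sin y < y * Real.sin x := by
  rcases le_or_gt y Real.pi with h | h
  · have hcc := strictConcaveOn_sin_Icc
    have h0 : (0 : ℝ) ∈ Set.Icc 0 Real.pi := ⟨le_rfl, Real.pi_pos.le⟩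
    have hymem : y ∈ Set.Icc 0 Real.pi := ⟨by linarith, h⟩
    have hyne : (0 : ℝ) ≠ y := by linarith
    have ha : 0 < 1 - x / y := by
      rw [sub_pos, div_lt_one (by linarith)]; exact hxy
    have hb : 0 < x / y := div_pos hx (by linarith)
    have hsum : (1 - x / y) + x / y = 1 := by ring
    have hkey := hcc.2 h0 hymem hyne ha hb hsum
    simp only [smul_eq_mul, mul_zero, zero_add, Real.sin_zero] at hkey
    have hxval : x / y * y = x := div_mul_cancel₀ x (by linarith)
    rw [hxval] at hkey
    have hy0 : 0 < y := by linarith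
    rw [div_mul_eq_mul_div, div_lt_iff₀ hy0] at hkey
    nlinarith [hkey]
  · have h1 : Real.sin y ≤ 0 := by
      have h2 : 0 ≤ Real.sin (y - Real.pi) :=
        Real.sin_nonneg_of_nonneg_of_le_pi (by linarith) (by linarith)
      rw [Real.sin_sub_pi] at h2
      linarith
    have h2 : 0 < Real.sin x := Real.sin_pos_of_pos_of_lt_pi hx hxpi
    nlinarith

/-- For `c > 0` and `0 < t` with `√(1+c²)·t/2 < π`, one has
`c·cos(ct/2)·sin(√(1+c²)t/2) ≠ √(1+c²)·sin(ct/2)·cos(√(1+c²)t/2)`. -/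
theorem su2_no_cut_outside_ek (c t : ℝ) (hc : 0 < c) (ht : 0 < t)
    (hlim : Real.sqrt (1 + c ^ 2) * t / 2 < Real.pi) :
    c * Real.cos (c * t / 2) * Real.sin (Real.sqrt (1 + c ^ 2) * t / 2)
      ≠ Real.sqrt (1 + c ^ 2) * Real.sin (c * t / 2)
          * Real.cos (Real.sqrt (1 + c ^ 2) * t / 2) := by
  set s := Real.sqrt (1 + c ^ 2) with hs
  have hs2 : s ^ 2 = 1 + c ^ 2 := Real.sq_sqrt (by positivity)
  have hs0 : 0 < s := Real.sqrt_pos.mpr (by positivity)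
  have hcs : c < s := by nlinarith
  set a := c * t / 2 with ha
  set b := s * t / 2 with hb
  have hab : a < b := by
    rw [ha, hb]; gcongr
  have ha0 : 0 < a := by positivity
  -- apply the key inequality with x = b - a, y = a + b
  have hkey : (b - a) * Real.sin (a + b) < (a + b) * Real.sin (b - a) :=
    key_sin_ineq (by linarith) (by linarith) (by linarith) (by linarith)
  -- rewrite boundary expressions
  have hsin_add : Real.sin (a + b) = Real.sin a * Real.cos b + Real.cos a * Real.sin b :=
    Real.sin_add a b
  have hsin_sub : Real.sin (b - a) = Real.sin b * Real.cos a - Real.cos b * Real.sin a :=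
    Real.sin_sub b a
  intro heq
  -- b - a = (s - c) * t / 2, a + b = (s + c) * t / 2
  rw [hsin_add, hsin_sub, ha, hb] at hkey
  rw [ha, hb] at heq
  have heq2 : t * (c * Real.cos (c * t / 2) * Real.sin (s * t / 2))
      = t * (s * Real.sin (c * t / 2) * Real.cos (s * t / 2)) := by rw [heq]
  nlinarith [hkey, heq2]
end

section
/- Let c ∈ (0,1) and set λ = √(1−c²). Consider the equation λ·cosh(λt/2)·sin(ct/2) = c·sinh(λt/2)·cos(ct/2) in the unknown t > 0. Then: (i) there is no solution t > 0 with ct/2 ∈ (0, π]; (ii) there exists a solution t > 0 with ct/2 ∈ (π, 3π/2). -/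
open Real

lemma sinh_lt_mul_cosh {y : ℝ} (hy : 0 < y) : Real.sinh y < y * Real.cosh y := by
  have h : StrictMonoOn (fun x : ℝ => x * Real.cosh x - Real.sinh x) (Set.Ici 0) := by
    apply strictMonoOn_of_deriv_pos (convex_Ici 0)
    · fun_prop
    · intro x hx
      simp only [interior_Ici, Set.mem_Ioi] at hx
      have : deriv (fun x : ℝ => x * Real.cosh x - Real.sinh x) x = x * Real.sinh x := by
        simp
      rw [this]
      positivity
  have := h (Set.self_mem_Ici) (Set.mem_Ici.2 hy.le) hy
  simpa using this

/-- For `c ∈ (0,1)` and `λ = √(1-c²)`, the equation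
`λ·cosh(λt/2)·sin(ct/2) = c·sinh(λt/2)·cos(ct/2)` has no solution `t > 0` with
`ct/2 ∈ (0, π]`, but has a solution `t > 0` with `ct/2 ∈ (π, 3π/2)`. -/
theorem sl2_first_symmetric_time (c : ℝ) (hc0 : 0 < c) (hc1 : c < 1) :
    (¬ ∃ t : ℝ, 0 < t ∧ c * t / 2 ∈ Set.Ioc 0 Real.pi ∧
        Real.sqrt (1 - c ^ 2) * Real.cosh (Real.sqrt (1 - c ^ 2) * t / 2)
            * Real.sin (c * t / 2)
          = c * Real.sinh (Real.sqrt (1 - c ^ 2) * t / 2) * Real.cos (c * t / 2)) ∧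
    (∃ t : ℝ, 0 < t ∧ c * t / 2 ∈ Set.Ioo Real.pi (3 * Real.pi / 2) ∧
        Real.sqrt (1 - c ^ 2) * Real.cosh (Real.sqrt (1 - c ^ 2) * t / 2)
            * Real.sin (c * t / 2)
          = c * Real.sinh (Real.sqrt (1 - c ^ 2) * t / 2) * Real.cos (c * t / 2)) := by
  have hl0 : 0 < Real.sqrt (1 - c ^ 2) := Real.sqrt_pos.2 (by nlinarith)
  set l := Real.sqrt (1 - c ^ 2) with hl
  clear_value l
  constructor
  · rintro ⟨t, ht, ⟨hu0, huπ⟩, heq⟩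
    set u := c * t / 2 with hu
    set y := l * t / 2 with hy
    clear_value u y
    have hy0 : 0 < y := by rw [hy]; positivity
    have hsinh : 0 < Real.sinh y := Real.sinh_pos_iff.2 hy0
    have hcosh : 0 < Real.cosh y := Real.cosh_pos y
    -- show LHS > RHS always
    have key : c * Real.sinh y * Real.cos u < l * Real.cosh y * Real.sin u := by
      rcases lt_trichotomy (Real.cos u) 0 with hcu | hcu | hcu
      · have hsu : 0 ≤ Real.sin u := Real.sin_nonneg_of_nonneg_of_le_pi hu0.le huπ
        have h1 : c * Real.sinh y * Real.cos u < 0 :=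
          mul_neg_of_pos_of_neg (mul_pos hc0 hsinh) hcu
        have h2 : 0 ≤ l * Real.cosh y * Real.sin u :=
          mul_nonneg (mul_pos hl0 hcosh).le hsu
        linarith
      · have hs2 : Real.sin u ^ 2 = 1 := by
          have := Real.sin_sq_add_cos_sq u
          nlinarith
        have hsu : 0 ≤ Real.sin u := Real.sin_nonneg_of_nonneg_of_le_pi hu0.le huπ
        have hsu1 : Real.sin u = 1 := by nlinarith
        rw [hcu, hsu1]
        nlinarith
      · -- cos u > 0, so u < π/2
        have hulthalf : u < Real.pi / 2 := by
          by_contra h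
          push_neg at h
          have := Real.cos_nonpos_of_pi_div_two_le_of_le h (by nlinarith [Real.pi_pos])
          linarith
        have htan : u < Real.tan u := Real.lt_tan hu0 hulthalf
        have h1 : c * Real.sinh y < c * (y * Real.cosh y) := by
          have := sinh_lt_mul_cosh hy0
          nlinarith
        have h2 : c * y = l * u := by rw [hu, hy]; ring
        have h3 : c * Real.sinh y < l * u * Real.cosh y := by nlinarith
        have h4 : l * u * Real.cosh y < l * Real.tan u * Real.cosh y :=
          mul_lt_mul_of_pos_right (mul_lt_mul_of_pos_left htan hl0) hcosh
        have h5 : Real.tan u * Real.cos u = Real.sin u := by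
          rw [Real.tan_eq_sin_div_cos]
          field_simp
        have h6 := mul_lt_mul_of_pos_right (h3.trans h4) hcu
        have h7 : l * Real.tan u * Real.cosh y * Real.cos u
            = l * Real.cosh y * Real.sin u := by rw [← h5]; ring
        linarith
    linarith [heq.symm.le, key]
  · have hcne : c ≠ 0 := ne_of_gt hc0
    have hπ : 0 < Real.pi := Real.pi_pos
    set f : ℝ → ℝ := fun t => l * Real.cosh (l * t / 2) * Real.sin (c * t / 2)
      - c * Real.sinh (l * t / 2) * Real.cos (c * t / 2) with hf
    have hab : 2 * Real.pi / c < 3 * Real.pi / c := by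
      rw [div_lt_div_iff₀ hc0 hc0]; nlinarith
    have hcont : ContinuousOn f (Set.Icc (2 * Real.pi / c) (3 * Real.pi / c)) := by
      apply Continuous.continuousOn
      rw [hf]; fun_prop
    have ha : c * (2 * Real.pi / c) / 2 = Real.pi := by field_simp
    have hb : c * (3 * Real.pi / c) / 2 = 3 * Real.pi / 2 := by field_simp
    have hfa : 0 < f (2 * Real.pi / c) := by
      simp only [hf, ha, Real.sin_pi, Real.cos_pi]
      have : 0 < Real.sinh (l * (2 * Real.pi / c) / 2) :=
        Real.sinh_pos_iff.2 (by positivity)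
      nlinarith
    have hfb : f (3 * Real.pi / c) < 0 := by
      simp only [hf, hb]
      rw [show (3:ℝ) * Real.pi / 2 = Real.pi / 2 + Real.pi by ring,
        Real.sin_add_pi, Real.cos_add_pi, Real.sin_pi_div_two, Real.cos_pi_div_two]
      have : 0 < Real.cosh (l * (3 * Real.pi / c) / 2) := Real.cosh_pos _
      nlinarith
    have h0 : (0:ℝ) ∈ Set.Ioo (f (3 * Real.pi / c)) (f (2 * Real.pi / c)) :=
      ⟨hfb, hfa⟩
    obtain ⟨t, htmem, htval⟩ := intermediate_value_Ioo' hab.le hcont h0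
    obtain ⟨ht1, ht2⟩ := htmem
    have ht1' : 2 * Real.pi < t * c := (div_lt_iff₀ hc0).1 ht1
    have ht2' : t * c < 3 * Real.pi := (lt_div_iff₀ hc0).1 ht2
    refine ⟨t, ?_, ⟨by linarith, by linarith⟩, ?_⟩
    · have : 0 < 2 * Real.pi / c := by positivity
      linarith
    · have h := htval
      simp only [hf] at h
      linarith
end
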